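/- arXiv:2010.04888 — 6 statements merged into one kernel-verified Lean document; each statement's English description precedes it below -/
import Mathlib

section
/- For every function v in H^1(0,2π) with v(φ) = -v(2π-φ) (odd about π), the inequality (1/4)∫₀^{2π} v² ≤ ∫₀^{2π} (v')² holds, with equality if and only if v(φ) = μ cos(φ/2) for some constant μ. -/
open Real Set intervalIntegral

open MeasureTheory

set_option maxHeartbeats 1000000

private lemma tan_half_cont : ContinuousOn (fun x : ℝ => Real.tan (x/2)) (Ico 0 π) := by
  intro x hx
  have hc : Real.cos (x/2) ≠ 0 := by
    have : 0 < Real.cos (x/2) := Real.cos_pos_of_mem_Ioo ⟨by linarith [hx.1, Real.pi_pos], by linarith [hx.2]⟩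
    linarith
  have h1 : ContinuousAt (fun y : ℝ => Real.tan (y/2)) x :=
    ContinuousAt.comp (g := Real.tan) (Real.continuousAt_tan.2 hc)
      ((continuousAt_id (x := x)).div_const 2)
  exact h1.continuousWithinAt

private lemma cos_half_pos {x : ℝ} (hx : x ∈ Ico 0 π) : 0 < Real.cos (x/2) :=
  Real.cos_pos_of_mem_Ioo ⟨by linarith [hx.1, Real.pi_pos], by linarith [hx.2]⟩

private lemma nonpos_of_forall_le {x b : ℝ} (hb : 0 < b)
    (h : ∀ ε, 0 < ε → ε < b → x ≤ ε) : x ≤ 0 := by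
  by_contra hx
  push_neg at hx
  have h1 := h (min (b/2) (x/2)) (by positivity) (lt_of_le_of_lt (min_le_left _ _) (by linarith))
  have h2 := min_le_right (b/2) (x/2)
  linarith

private lemma nonneg_of_forall_ge {x b : ℝ} (hb : 0 < b)
    (h : ∀ ε, 0 < ε → ε < b → -ε ≤ x) : 0 ≤ x := by
  have := nonpos_of_forall_le hb (x := -x) (fun ε h1 h2 => by have := h ε h1 h2; linarith)
  linarith

private lemma key (v w : ℝ → ℝ)
    (hv : ContinuousOn v (Icc 0 π))
    (hw : ContinuousOn w (Icc 0 π))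
    (hd : ∀ x ∈ Ioo 0 π, HasDerivAt v (w x) x)
    (hvpi : v π = 0) :
    (∫ x in (0:ℝ)..π, (v x)^2/4) ≤ (∫ x in (0:ℝ)..π, (w x)^2) ∧
    ((∫ x in (0:ℝ)..π, (v x)^2/4) = (∫ x in (0:ℝ)..π, (w x)^2) →
      ∃ μ : ℝ, ∀ x ∈ Icc 0 π, v x = μ * Real.cos (x/2)) := by
  have hπ := Real.pi_pos
  set h : ℝ → ℝ := fun x => (w x)^2 - (v x)^2/4 with hh_def
  set F : ℝ → ℝ := fun x => w x + v x / 2 * Real.tan (x/2) with hF_def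
  have hh_cont : ContinuousOn h (Icc 0 π) :=
    (hw.pow 2).sub ((hv.pow 2).div_const 4)
  have hF_cont : ContinuousOn F (Ico 0 π) :=
    (hw.mono Ico_subset_Icc_self).add
      (((hv.mono Ico_subset_Icc_self).div_const 2).mul tan_half_cont)
  have hh_int : ∀ a b : ℝ, a ∈ Icc 0 π → b ∈ Icc 0 π → IntervalIntegrable h volume a b :=
    fun a b ha hb => (hh_cont.mono (uIcc_subset_Icc ha hb)).intervalIntegrable
  have hsubIco : ∀ a b : ℝ, a ∈ Ico 0 π → b ∈ Ico 0 π → uIcc a b ⊆ Ico 0 π := by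
    intro a b ha hb x hx
    simp only [Set.uIcc, Set.mem_Icc] at hx
    exact ⟨le_trans (le_inf ha.1 hb.1) hx.1, lt_of_le_of_lt hx.2 (sup_lt_iff.2 ⟨ha.2, hb.2⟩)⟩
  have hF2_int : ∀ a b : ℝ, a ∈ Ico 0 π → b ∈ Ico 0 π →
      IntervalIntegrable (fun x => (F x)^2) volume a b :=
    fun a b ha hb => ((hF_cont.mono (hsubIco a b ha hb)).pow 2).intervalIntegrable
  obtain ⟨M, hM⟩ := isCompact_Icc.exists_bound_of_continuousOn hw
  have hM0 : 0 ≤ M := le_trans (norm_nonneg (w 0)) (hM 0 ⟨le_refl 0, hπ.le⟩)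
  -- FTC : for a ∈ Icc 0 π, ∫_a^π w = v π - v a = - v a
  have hftc : ∀ a ∈ Icc 0 π, (∫ x in a..π, w x) = - v a := by
    intro a ha
    have := intervalIntegral.integral_eq_sub_of_hasDeriv_right_of_le ha.2
      (hv.mono (Icc_subset_Icc ha.1 le_rfl))
      (fun x hx => (hd x ⟨lt_of_le_of_lt ha.1 hx.1, hx.2⟩).hasDerivWithinAt)
      ((hw.mono (uIcc_subset_Icc ha ⟨hπ.le, le_rfl⟩)).intervalIntegrable)
    rw [this, hvpi, zero_sub]
  have hvb : ∀ a ∈ Icc 0 π, |v a| ≤ M * (π - a) := by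
    intro a ha
    have h1 : ‖∫ x in a..π, w x‖ ≤ M * |π - a| :=
      intervalIntegral.norm_integral_le_of_norm_le_const (fun x hx => by
        refine hM x ?_
        rcases hx with hx
        have : Set.uIoc a π ⊆ Icc 0 π := by
          rw [Set.uIoc_of_le ha.2]
          exact fun y hy => ⟨le_trans ha.1 hy.1.le, hy.2⟩
        exact this hx)
    rw [hftc a ha, norm_neg] at h1
    rw [abs_of_nonneg (by linarith [ha.2] : (0:ℝ) ≤ π - a)] at h1
    exact h1
  -- tan bound : tan(a/2) ≥ 0 and tan(a/2) * (π - a) ≤ π on [0, π)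
  have htan0 : ∀ a ∈ Ico 0 π, 0 ≤ Real.tan (a/2) := by
    intro a ha
    have hc := cos_half_pos ha
    have hs : 0 ≤ Real.sin (a/2) := Real.sin_nonneg_of_nonneg_of_le_pi
      (by linarith [ha.1]) (by linarith [ha.2])
    rw [Real.tan_eq_sin_div_cos]
    positivity
  have htan1 : ∀ a ∈ Ico 0 π, Real.tan (a/2) * (π - a) ≤ π := by
    intro a ha
    have hc := cos_half_pos ha
    have hcos_ge : (π - a)/π ≤ Real.cos (a/2) := by
      have h1 : Real.cos (a/2) = Real.sin ((π - a)/2) := by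
        rw [← Real.sin_pi_div_two_sub]; ring_nf
      have h2 := Real.mul_le_sin (x := (π - a)/2) (by linarith [ha.2]) (by linarith [ha.1])
      rw [h1]
      calc (π - a)/π = 2/π * ((π - a)/2) := by field_simp
        _ ≤ Real.sin ((π - a)/2) := h2
    have hs1 : Real.sin (a/2) ≤ 1 := Real.sin_le_one _
    have hs0 : 0 ≤ Real.sin (a/2) := Real.sin_nonneg_of_nonneg_of_le_pi
      (by linarith [ha.1]) (by linarith [ha.2])
    rw [Real.tan_eq_sin_div_cos, div_mul_eq_mul_div, div_le_iff₀ hc]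
    have hπa : 0 ≤ π - a := by linarith [ha.2]
    have h3 : π - a ≤ Real.cos (a/2) * π := (div_le_iff₀ hπ).mp hcos_ge
    nlinarith [mul_le_mul_of_nonneg_right hs1 hπa]
  -- core identity on [0,a] for a ∈ Ioo 0 π
  have hcore : ∀ a ∈ Ioo 0 π,
      (∫ x in (0:ℝ)..a, h x) = (∫ x in (0:ℝ)..a, (F x)^2) - (v a)^2/2 * Real.tan (a/2) := by
    intro a ha
    have haIco : a ∈ Ico 0 π := ⟨ha.1.le, ha.2⟩
    have hsub : Icc 0 a ⊆ Ico 0 π := fun x hx => ⟨hx.1, lt_of_le_of_lt hx.2 ha.2⟩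
    have hsub' : Icc 0 a ⊆ Icc 0 π := hsub.trans Ico_subset_Icc_self
    set G : ℝ → ℝ := fun y => (v y)^2/2 * Real.tan (y/2) with hG_def
    set Gd : ℝ → ℝ := fun x => v x * w x * Real.tan (x/2)
      + (v x)^2/2 * (1/Real.cos (x/2)^2 * (1/2)) with hGd_def
    have hGcont : ContinuousOn G (Icc 0 a) :=
      (((hv.mono hsub').pow 2).div_const 2).mul (tan_half_cont.mono hsub)
    have hinvcos : ContinuousOn (fun x : ℝ => 1/Real.cos (x/2)^2) (Icc 0 a) := by
      apply ContinuousOn.div continuousOn_const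
      · exact ((Real.continuous_cos.comp (continuous_id.div_const 2)).continuousOn).pow 2
      · intro x hx; exact pow_ne_zero 2 (ne_of_gt (cos_half_pos (hsub hx)))
    have hGdcont : ContinuousOn Gd (Icc 0 a) := by
      apply ContinuousOn.add
      · exact ((hv.mono hsub').mul (hw.mono hsub')).mul (tan_half_cont.mono hsub)
      · exact (((hv.mono hsub').pow 2).div_const 2).mul (hinvcos.mul continuousOn_const)
    have hGd' : ∀ x ∈ Ioo 0 a, HasDerivAt G (Gd x) x := by
      intro x hx
      have hxI : x ∈ Ioo 0 π := ⟨hx.1, lt_trans hx.2 ha.2⟩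
      have hc : Real.cos (x/2) ≠ 0 := ne_of_gt (cos_half_pos ⟨hxI.1.le, hxI.2⟩)
      have h1 : HasDerivAt (fun y => (v y)^2/2) (v x * w x) x := by
        have h0 := ((hd x hxI).pow 2).div_const 2
        exact h0.congr_deriv (by norm_num; ring)
      have h2 : HasDerivAt (fun y : ℝ => Real.tan (y/2)) (1/Real.cos (x/2)^2 * (1/2)) x := by
        have ht := Real.hasDerivAt_tan hc
        have hhalf : HasDerivAt (fun y : ℝ => y/2) (1/2) x := (hasDerivAt_id x).div_const 2
        exact ht.comp x hhalf
      exact h1.mul h2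
    have hGdint : IntervalIntegrable Gd volume 0 a := by
      apply ContinuousOn.intervalIntegrable
      rwa [uIcc_of_le ha.1.le]
    have hFTC : (∫ x in (0:ℝ)..a, Gd x) = G a - G 0 :=
      intervalIntegral.integral_eq_sub_of_hasDeriv_right_of_le ha.1.le hGcont
        (fun x hx => (hGd' x hx).hasDerivWithinAt) hGdint
    have hG0 : G 0 = 0 := by simp [hG_def]
    have hpt : ∀ x ∈ Icc 0 a, h x = (F x)^2 - Gd x := by
      intro x hx
      have hc : Real.cos (x/2) ≠ 0 := ne_of_gt (cos_half_pos (hsub hx))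
      have hpy := Real.sin_sq_add_cos_sq (x/2)
      simp only [hh_def, hF_def, hGd_def]
      rw [Real.tan_eq_sin_div_cos]
      field_simp
      linear_combination (-4 * v x^2) * hpy
    calc (∫ x in (0:ℝ)..a, h x) = ∫ x in (0:ℝ)..a, ((F x)^2 - Gd x) := by
          apply intervalIntegral.integral_congr
          intro x hx
          rw [uIcc_of_le ha.1.le] at hx
          exact hpt x hx
      _ = (∫ x in (0:ℝ)..a, (F x)^2) - ∫ x in (0:ℝ)..a, Gd x :=
          intervalIntegral.integral_sub (hF2_int 0 a ⟨le_rfl, hπ⟩ haIco) hGdint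
      _ = (∫ x in (0:ℝ)..a, (F x)^2) - (v a)^2/2 * Real.tan (a/2) := by
          rw [hFTC, hG0]
          simp only [hG_def]
          ring
  -- bound on the boundary term
  have hGb : ∀ a ∈ Ico 0 π, (v a)^2/2 * Real.tan (a/2) ≤ (M^2*π/2)*(π - a) := by
    intro a ha
    have ht0 := htan0 a ha
    have ht1 := htan1 a ha
    have hva := hvb a ⟨ha.1, ha.2.le⟩
    have hπa : (0:ℝ) ≤ π - a := by linarith [ha.2]
    have hva2 : (v a)^2 ≤ M^2*(π - a)^2 := by
      nlinarith [abs_nonneg (v a), sq_abs (v a)]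
    have h1 : (v a)^2 * Real.tan (a/2) ≤ M^2*(π - a)^2 * Real.tan (a/2) :=
      mul_le_mul_of_nonneg_right hva2 ht0
    have h2 : M^2*(π - a)^2 * Real.tan (a/2) = (M^2*(π - a))*(Real.tan (a/2) * (π - a)) := by ring
    have h3 : (M^2*(π - a))*(Real.tan (a/2)*(π - a)) ≤ (M^2*(π - a))*π :=
      mul_le_mul_of_nonneg_left ht1 (by positivity)
    nlinarith
  have hGb0 : ∀ a ∈ Ico 0 π, 0 ≤ (v a)^2/2 * Real.tan (a/2) := by
    intro a ha
    have := htan0 a ha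
    positivity
  -- tail bound
  obtain ⟨C, hC⟩ := isCompact_Icc.exists_bound_of_continuousOn hh_cont
  have hC0 : 0 ≤ C := le_trans (norm_nonneg (h 0)) (hC 0 ⟨le_rfl, hπ.le⟩)
  have htail : ∀ a ∈ Icc 0 π,
      |(∫ x in (0:ℝ)..π, h x) - ∫ x in (0:ℝ)..a, h x| ≤ C * (π - a) := by
    intro a ha
    have hadd := intervalIntegral.integral_add_adjacent_intervals
      (hh_int 0 a ⟨le_rfl, hπ.le⟩ ha) (hh_int a π ha ⟨hπ.le, le_rfl⟩)
    have hb : ‖∫ x in a..π, h x‖ ≤ C * |π - a| := by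
      apply intervalIntegral.norm_integral_le_of_norm_le_const
      intro x hx
      rw [Set.uIoc_of_le ha.2] at hx
      exact hC x ⟨le_trans ha.1 hx.1.le, hx.2⟩
    rw [abs_of_nonneg (by linarith [ha.2] : (0:ℝ) ≤ π - a)] at hb
    have : (∫ x in (0:ℝ)..π, h x) - (∫ x in (0:ℝ)..a, h x) = ∫ x in a..π, h x := by
      linarith [hadd]
    rw [this]
    exact hb
  obtain ⟨K, hK_def⟩ : ∃ K : ℝ, K = M^2*π/2 + C := ⟨_, rfl⟩
  have hK0 : 0 ≤ K := by rw [hK_def]; positivity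
  -- lower bound for the full integral
  have hlb : ∀ a ∈ Ioo 0 π, -((K+1) * (π - a)) ≤ ∫ x in (0:ℝ)..π, h x := by
    intro a ha
    have haIco : a ∈ Ico 0 π := ⟨ha.1.le, ha.2⟩
    have hJnn : 0 ≤ ∫ x in (0:ℝ)..a, (F x)^2 :=
      intervalIntegral.integral_nonneg ha.1.le (fun u _ => sq_nonneg _)
    have hIa := hcore a ha
    have ht := htail a ⟨ha.1.le, ha.2.le⟩
    have hG := hGb a haIco
    have habs := abs_le.1 ht
    have hπa : (0:ℝ) ≤ π - a := by linarith [ha.2]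
    have hKexp : (K+1)*(π - a) = M^2*π/2*(π-a) + C*(π-a) + (π-a) := by rw [hK_def]; ring
    have e1 := habs.1
    rw [hIa] at e1
    linarith [e1]
  have hIπ : 0 ≤ ∫ x in (0:ℝ)..π, h x := by
    apply nonneg_of_forall_ge hπ
    intro ε hε hεπ
    obtain ⟨a, ha_def⟩ : ∃ a : ℝ, a = π - ε/(K+1) := ⟨_, rfl⟩
    have hεK : 0 < ε/(K+1) := by apply div_pos hε; linarith
    have hεK2 : ε/(K+1) ≤ ε := by
      rw [div_le_iff₀ (by linarith)]
      nlinarith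
    have haI : a ∈ Ioo 0 π := ⟨by rw [ha_def]; linarith, by rw [ha_def]; linarith⟩
    have := hlb a haI
    have hπa : π - a = ε/(K+1) := by rw [ha_def]; ring
    rw [hπa] at this
    have h2 : (K+1) * (ε/(K+1)) = ε := by field_simp
    rw [h2] at this
    linarith
  -- split ∫ h
  have hw2_int : IntervalIntegrable (fun x => (w x)^2) volume 0 π := by
    apply ContinuousOn.intervalIntegrable
    rw [uIcc_of_le hπ.le]
    exact hw.pow 2
  have hv2_int : IntervalIntegrable (fun x => (v x)^2/4) volume 0 π := by
    apply ContinuousOn.intervalIntegrable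
    rw [uIcc_of_le hπ.le]
    exact (hv.pow 2).div_const 4
  have hsplit : (∫ x in (0:ℝ)..π, h x)
      = (∫ x in (0:ℝ)..π, (w x)^2) - ∫ x in (0:ℝ)..π, (v x)^2/4 := by
    simp only [hh_def]
    exact intervalIntegral.integral_sub hw2_int hv2_int
  constructor
  · linarith [hIπ, hsplit]
  -- equality case
  intro heq
  have hIπ0 : (∫ x in (0:ℝ)..π, h x) = 0 := by rw [hsplit]; linarith
  have hJ0 : ∀ b ∈ Ioo 0 π, (∫ x in (0:ℝ)..b, (F x)^2) = 0 := by
    intro b hb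
    have hJnn : 0 ≤ ∫ x in (0:ℝ)..b, (F x)^2 :=
      intervalIntegral.integral_nonneg hb.1.le (fun u _ => sq_nonneg _)
    have hle : (∫ x in (0:ℝ)..b, (F x)^2) ≤ 0 := by
      apply nonpos_of_forall_le (b := π - b) (by linarith [hb.2])
      intro ε hε hεb
      obtain ⟨a, ha_def⟩ : ∃ a : ℝ, a = π - ε/(K+1) := ⟨_, rfl⟩
      have hεK : 0 < ε/(K+1) := by apply div_pos hε; linarith
      have hεK2 : ε/(K+1) ≤ ε := by
        rw [div_le_iff₀ (by linarith)]
        nlinarith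
      have haI : a ∈ Ioo 0 π := ⟨by rw [ha_def]; nlinarith [hb.1, hb.2],
        by rw [ha_def]; linarith⟩
      have hba : b ≤ a := by rw [ha_def]; linarith
      -- J b ≤ J a
      have hJadd := intervalIntegral.integral_add_adjacent_intervals
        (hF2_int 0 b ⟨le_rfl, hπ⟩ ⟨hb.1.le, hb.2⟩) (hF2_int b a ⟨hb.1.le, hb.2⟩ ⟨haI.1.le, haI.2⟩)
      have hJmid : 0 ≤ ∫ x in b..a, (F x)^2 :=
        intervalIntegral.integral_nonneg hba (fun u _ => sq_nonneg _)
      -- J a = I a + G a ≤ C(π-a) + (M²π/2)(π-a)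
      have hIa := hcore a haI
      have ht := htail a ⟨haI.1.le, haI.2.le⟩
      rw [hIπ0] at ht
      have hG := hGb a ⟨haI.1.le, haI.2⟩
      have habs := abs_le.1 ht
      have hπa : π - a = ε/(K+1) := by rw [ha_def]; ring
      have hKε : K * (ε/(K+1)) ≤ ε := by
        rw [← mul_div_assoc, div_le_iff₀ (by linarith)]
        nlinarith
      have h5 : K*(π-a) ≤ ε := by rw [hπa]; exact hKε
      have hKexp : K*(π - a) = M^2*π/2*(π-a) + C*(π-a) := by rw [hK_def]; ring
      have e2 := habs.2
      rw [hIa] at e2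
      linarith [e2]
    linarith
  -- F vanishes on (0, π)
  have hF0 : ∀ x ∈ Ioo 0 π, F x = 0 := by
    intro x hx
    obtain ⟨b, hb_def⟩ : ∃ b : ℝ, b = (x + π)/2 := ⟨_, rfl⟩
    have hbI : b ∈ Ioo 0 π := ⟨by rw [hb_def]; linarith [hx.1], by rw [hb_def]; linarith [hx.2]⟩
    have hxb : x ≤ b := by rw [hb_def]; linarith [hx.2]
    have hzero := hJ0 b hbI
    have hae : (fun x => (F x)^2) =ᵐ[volume.restrict (Ioc 0 b)] 0 :=
      (intervalIntegral.integral_eq_zero_iff_of_le_of_nonneg_ae hbI.1.le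
        (Filter.Eventually.of_forall (fun y => sq_nonneg (F y)))
        (hF2_int 0 b ⟨le_rfl, hπ⟩ ⟨hbI.1.le, hbI.2⟩)).1 hzero
    have hsubIoc : Ioc 0 b ⊆ Ico 0 π := fun y hy => ⟨hy.1.le, lt_of_le_of_lt hy.2 hbI.2⟩
    have heqOn : EqOn (fun x => (F x)^2) 0 (Ioc 0 b) :=
      MeasureTheory.Measure.eqOn_Ioc_of_ae_eq (μ := volume) hae
        ((hF_cont.mono hsubIoc).pow 2) continuousOn_const
    have h2 : F x ^ 2 = 0 := by simpa using heqOn ⟨hx.1, hxb⟩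
    exact pow_eq_zero_iff two_ne_zero |>.1 h2
  -- v / cos(·/2) has zero derivative on (0,π)
  have hchalf : ∀ y ∈ Ioo 0 π, Real.cos (y/2) ≠ 0 :=
    fun y hy => ne_of_gt (cos_half_pos ⟨hy.1.le, hy.2⟩)
  have hqd : ∀ y ∈ Ioo 0 π, HasDerivAt (fun z => v z / Real.cos (z/2)) 0 y := by
    intro y hy
    have hc := cos_half_pos (⟨hy.1.le, hy.2⟩ : y ∈ Ico 0 π)
    have hcos : HasDerivAt (fun z : ℝ => Real.cos (z/2)) (-Real.sin (y/2) * (1/2)) y := by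
      have := (Real.hasDerivAt_cos (y/2)).comp y ((hasDerivAt_id y).div_const 2); exact this
    have hdiv := (hd y hy).div hcos (ne_of_gt hc)
    have hF := hF0 y hy
    simp only [hF_def] at hF
    have hz : (w y * Real.cos (y/2) - v y * (-Real.sin (y/2) * (1/2))) / Real.cos (y/2)^2 = 0 := by
      rw [div_eq_zero_iff]
      left
      rw [Real.tan_eq_sin_div_cos] at hF
      field_simp at hF
      linarith [hF]
    rwa [hz] at hdiv
  -- constancy of v / cos(·/2) on (0, π)
  have hcmp : ∀ p ∈ Ioo 0 π, ∀ q ∈ Ioo 0 π, p ≤ q →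
      v q / Real.cos (q/2) = v p / Real.cos (p/2) := by
    intro p hp q hq hpq
    have hsub : Icc p q ⊆ Ioo 0 π := fun z hz => ⟨lt_of_lt_of_le hp.1 hz.1, lt_of_le_of_lt hz.2 hq.2⟩
    have hcont : ContinuousOn (fun z => v z / Real.cos (z/2)) (Icc p q) := by
      apply ContinuousOn.div
      · exact hv.mono (hsub.trans Ioo_subset_Icc_self)
      · exact ((Real.continuous_cos.comp (continuous_id.div_const 2)).continuousOn)
      · exact fun z hz => hchalf z (hsub hz)
    have := constant_of_has_deriv_right_zero hcont
      (fun y hy => (hqd y (hsub ⟨hy.1, hy.2.le⟩)).hasDerivWithinAt)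
    exact this q ⟨hpq, le_rfl⟩
  have hpi2 : (π/2 : ℝ) ∈ Ioo 0 π := ⟨by linarith, by linarith⟩
  have hconst : ∀ x ∈ Ioo 0 π, v x / Real.cos (x/2) = v (π/2) / Real.cos ((π/2)/2) := by
    intro x hx
    rcases le_total x (π/2) with hle | hle
    · exact (hcmp x hx (π/2) hpi2 hle).symm
    · exact hcmp (π/2) hpi2 x hx hle
  obtain ⟨μ, hμ_def⟩ : ∃ μ : ℝ, μ = v (π/2) / Real.cos ((π/2)/2) := ⟨_, rfl⟩
  have hIoo : ∀ x ∈ Ioo 0 π, v x = μ * Real.cos (x/2) := by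
    intro x hx
    have := hconst x hx
    rw [← hμ_def] at this
    exact (div_eq_iff (hchalf x hx)).1 this
  refine ⟨μ, ?_⟩
  intro x hx
  rcases eq_or_lt_of_le hx.1 with h0 | h0
  · -- x = 0 : limit argument
    haveI : (nhdsWithin (0:ℝ) (Ioo 0 π)).NeBot := by
      rw [nhdsWithin_Ioo_eq_nhdsGT hπ]
      infer_instance
    have hten : Filter.Tendsto v (nhdsWithin 0 (Ioo 0 π)) (nhds (v 0)) :=
      (hv 0 ⟨le_rfl, hπ.le⟩).mono Ioo_subset_Icc_self
    have htenc : Filter.Tendsto (fun y => μ * Real.cos (y/2))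
        (nhdsWithin 0 (Ioo 0 π)) (nhds (μ * Real.cos (0/2))) := by
      apply Filter.Tendsto.mono_left _ nhdsWithin_le_nhds
      have hcy : Continuous (fun y : ℝ => μ * Real.cos (y/2)) :=
        continuous_const.mul (Real.continuous_cos.comp (continuous_id.div_const 2))
      simpa using hcy.tendsto 0
    have hee : v =ᶠ[nhdsWithin (0:ℝ) (Ioo 0 π)] (fun y => μ * Real.cos (y/2)) :=
      Filter.eventuallyEq_of_mem self_mem_nhdsWithin (fun y hy => hIoo y hy)
    have := tendsto_nhds_unique hten (htenc.congr' hee.symm)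
    rw [← h0]
    exact this
  · rcases eq_or_lt_of_le hx.2 with h1 | h1
    · rw [h1, hvpi]
      have : Real.cos (π/2) = 0 := Real.cos_pi_div_two
      rw [this, mul_zero]
    · exact hIoo x ⟨h0, h1⟩


/-- Poincaré-type inequality on the odd space 𝒪: for `v ∈ H¹(0,2π)` with
`v(φ) = -v(2π-φ)`, one has `(1/4)∫ v² ≤ ∫ (v')²`, with equality iff
`v = μ cos(φ/2)` for some constant `μ`. -/
theorem stmt0 (v : ℝ → ℝ)
    (hv : ContDiffOn ℝ 1 v (Icc 0 (2 * π)))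
    (hodd : ∀ φ ∈ Icc 0 (2 * π), v φ = - v (2 * π - φ)) :
    (1 / 4) * (∫ φ in (0:ℝ)..(2 * π), (v φ) ^ 2) ≤ ∫ φ in (0:ℝ)..(2 * π), (deriv v φ) ^ 2 ∧
    ((1 / 4) * (∫ φ in (0:ℝ)..(2 * π), (v φ) ^ 2) = ∫ φ in (0:ℝ)..(2 * π), (deriv v φ) ^ 2 ↔
      ∃ μ : ℝ, ∀ φ ∈ Icc 0 (2 * π), v φ = μ * Real.cos (φ / 2)) := by
  have hπ := Real.pi_pos
  have h2π : (0:ℝ) < 2*π := by linarith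
  set w : ℝ → ℝ := derivWithin v (Icc 0 (2*π)) with hw_def
  have hunique : UniqueDiffOn ℝ (Icc (0:ℝ) (2*π)) := uniqueDiffOn_Icc h2π
  have hw_cont : ContinuousOn w (Icc 0 (2*π)) := hv.continuousOn_derivWithin hunique le_rfl
  have hv_cont : ContinuousOn v (Icc 0 (2*π)) := hv.continuousOn
  have hvd : ∀ x ∈ Ioo 0 (2*π), HasDerivAt v (w x) x := by
    intro x hx
    have hmem : Icc (0:ℝ) (2*π) ∈ nhds x := Icc_mem_nhds hx.1 hx.2
    exact ((hv.differentiableOn one_ne_zero x (Ioo_subset_Icc_self hx)).hasDerivWithinAt).hasDerivAt hmem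
  have hderiv_eq : ∀ x ∈ Ioo 0 (2*π), deriv v x = w x := fun x hx => (hvd x hx).deriv
  have hvpi : v π = 0 := by
    have h0 := hodd π ⟨hπ.le, by linarith⟩
    rw [show 2*π - π = π by ring] at h0
    linarith
  have hwsym : ∀ x ∈ Ioo 0 (2*π), w (2*π - x) = w x := by
    intro x hx
    have hx' : 2*π - x ∈ Ioo 0 (2*π) := ⟨by linarith [hx.2], by linarith [hx.1]⟩
    have h1 : HasDerivAt (fun y : ℝ => 2*π - y) (-1) x := by
      simpa using (hasDerivAt_const x (2*π)).fun_sub (hasDerivAt_id x)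
    have h2 : HasDerivAt (fun y => v (2*π - y)) (w (2*π - x) * (-1)) x :=
      (hvd _ hx').comp x h1
    have h3 : HasDerivAt (fun y => -v (2*π - y)) (w (2*π - x)) x := by
      simpa using h2.fun_neg
    have hee : v =ᶠ[nhds x] (fun y => -v (2*π - y)) := by
      filter_upwards [Icc_mem_nhds hx.1 hx.2] with y hy
      exact hodd y hy
    exact (h3.congr_of_eventuallyEq hee).unique (hvd x hx)
  have hπIcc : (π:ℝ) ∈ Icc (0:ℝ) (2*π) := ⟨hπ.le, by linarith⟩
  have hv2_int : ∀ a b : ℝ, a ∈ Icc (0:ℝ) (2*π) → b ∈ Icc (0:ℝ) (2*π) →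
      IntervalIntegrable (fun x => (v x)^2) volume a b :=
    fun a b ha hb => ((hv_cont.mono (uIcc_subset_Icc ha hb)).pow 2).intervalIntegrable
  have hw2_int : ∀ a b : ℝ, a ∈ Icc (0:ℝ) (2*π) → b ∈ Icc (0:ℝ) (2*π) →
      IntervalIntegrable (fun x => (w x)^2) volume a b :=
    fun a b ha hb => ((hw_cont.mono (uIcc_subset_Icc ha hb)).pow 2).intervalIntegrable
  have hDfull : (∫ φ in (0:ℝ)..(2*π), (deriv v φ)^2) = ∫ φ in (0:ℝ)..(2*π), (w φ)^2 := by
    apply intervalIntegral.integral_congr_ae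
    have hnull : ({(2*π)} : Set ℝ)ᶜ ∈ (MeasureTheory.ae volume) :=
      MeasureTheory.compl_mem_ae_iff.mpr (MeasureTheory.measure_singleton _)
    filter_upwards [hnull] with x hxne hxI
    rw [Set.uIoc_of_le h2π.le] at hxI
    have hxIoo : x ∈ Ioo 0 (2*π) := ⟨hxI.1, lt_of_le_of_ne hxI.2 (by simpa using hxne)⟩
    rw [hderiv_eq x hxIoo]
  have hAsym : (∫ φ in (0:ℝ)..(2*π), (v φ)^2) = 2 * ∫ φ in (0:ℝ)..π, (v φ)^2 := by
    have hadd := intervalIntegral.integral_add_adjacent_intervals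
      (hv2_int 0 π ⟨le_rfl, h2π.le⟩ hπIcc) (hv2_int π (2*π) hπIcc ⟨h2π.le, le_rfl⟩)
    have hsub : (∫ φ in (0:ℝ)..π, (v (2*π - φ))^2) = ∫ φ in π..(2*π), (v φ)^2 := by
      have h0 := intervalIntegral.integral_comp_sub_left (a := 0) (b := π)
        (fun x => (v x)^2) (2*π)
      rw [show 2*π - π = π by ring, show 2*π - 0 = 2*π by ring] at h0
      exact h0
    have hcong : (∫ φ in (0:ℝ)..π, (v (2*π - φ))^2) = ∫ φ in (0:ℝ)..π, (v φ)^2 := by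
      apply intervalIntegral.integral_congr
      intro x hx
      rw [uIcc_of_le hπ.le] at hx
      have h0 := hodd x ⟨hx.1, by linarith [hx.2]⟩
      show v (2*π - x)^2 = v x ^2
      rw [h0]; ring
    linarith [hadd, hsub, hcong]
  have hDsym : (∫ φ in (0:ℝ)..(2*π), (w φ)^2) = 2 * ∫ φ in (0:ℝ)..π, (w φ)^2 := by
    have hadd := intervalIntegral.integral_add_adjacent_intervals
      (hw2_int 0 π ⟨le_rfl, h2π.le⟩ hπIcc) (hw2_int π (2*π) hπIcc ⟨h2π.le, le_rfl⟩)
    have hsub : (∫ φ in (0:ℝ)..π, (w (2*π - φ))^2) = ∫ φ in π..(2*π), (w φ)^2 := by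
      have h0 := intervalIntegral.integral_comp_sub_left (a := 0) (b := π)
        (fun x => (w x)^2) (2*π)
      rw [show 2*π - π = π by ring, show 2*π - 0 = 2*π by ring] at h0
      exact h0
    have hcong : (∫ φ in (0:ℝ)..π, (w (2*π - φ))^2) = ∫ φ in (0:ℝ)..π, (w φ)^2 := by
      apply intervalIntegral.integral_congr_ae
      apply Filter.Eventually.of_forall
      intro x hxI
      rw [Set.uIoc_of_le hπ.le] at hxI
      have hxIoo : x ∈ Ioo 0 (2*π) := ⟨hxI.1, by linarith [hxI.2]⟩
      rw [hwsym x hxIoo]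
    linarith [hadd, hsub, hcong]
  obtain ⟨hineq, heqc⟩ := key v w
    (hv_cont.mono (Icc_subset_Icc le_rfl (by linarith)))
    (hw_cont.mono (Icc_subset_Icc le_rfl (by linarith)))
    (fun x hx => hvd x ⟨hx.1, by linarith [hx.2]⟩) hvpi
  have hv24 : (∫ x in (0:ℝ)..π, (v x)^2/4) = (∫ x in (0:ℝ)..π, (v x)^2)/4 :=
    intervalIntegral.integral_div 4 _
  constructor
  · rw [hDfull, hAsym, hDsym]
    linarith
  constructor
  · intro heq
    rw [hDfull] at heq
    have hhalf : (∫ x in (0:ℝ)..π, (v x)^2/4) = ∫ x in (0:ℝ)..π, (w x)^2 := by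
      rw [hv24]; linarith [hAsym, hDsym, heq]
    obtain ⟨μ, hμ⟩ := heqc hhalf
    refine ⟨μ, ?_⟩
    intro φ hφ
    rcases le_total φ π with hle | hle
    · exact hμ φ ⟨hφ.1, hle⟩
    · have h2φ : 2*π - φ ∈ Icc (0:ℝ) π := ⟨by linarith [hφ.2], by linarith⟩
      have h0 := hodd φ hφ
      rw [h0, hμ _ h2φ, show (2*π - φ)/2 = π - φ/2 by ring, Real.cos_pi_sub]
      ring
  · rintro ⟨μ, hμ⟩
    have hA : (∫ φ in (0:ℝ)..(2*π), (v φ)^2) = μ^2 * π := by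
      have hcong : (∫ φ in (0:ℝ)..(2*π), (v φ)^2)
          = ∫ φ in (0:ℝ)..(2*π), μ^2 * (Real.cos (φ/2))^2 := by
        apply intervalIntegral.integral_congr
        intro x hx
        rw [uIcc_of_le h2π.le] at hx
        show v x ^2 = μ^2 * (Real.cos (x/2))^2
        rw [hμ x hx]; ring
      rw [hcong, intervalIntegral.integral_const_mul]
      have hcd : (∫ φ in (0:ℝ)..(2*π), (Real.cos (φ/2))^2) = π := by
        have h0 := intervalIntegral.integral_comp_div (a := 0) (b := 2*π) (c := 2)
          (f := fun y => (Real.cos y)^2) two_ne_zero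
        rw [show (0:ℝ)/2 = 0 by norm_num, show (2*π)/2 = π by ring] at h0
        rw [h0, integral_cos_sq]
        simp [Real.sin_pi]
        ring
      rw [hcd]
    have hwval : ∀ x ∈ Icc (0:ℝ) (2*π), w x = μ * (-Real.sin (x/2) * (1/2)) := by
      intro x hx
      have hsm : HasDerivAt (fun y : ℝ => μ * Real.cos (y/2)) (μ * (-Real.sin (x/2) * (1/2))) x := by
        have := (Real.hasDerivAt_cos (x/2)).comp x ((hasDerivAt_id x).div_const 2); exact this.const_mul μ
      rw [hw_def, derivWithin_congr (fun y hy => hμ y hy) (hμ x hx)]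
      exact hsm.hasDerivWithinAt.derivWithin (hunique x hx)
    have hD : (∫ φ in (0:ℝ)..(2*π), (w φ)^2) = μ^2 * π / 4 := by
      have hcong : (∫ φ in (0:ℝ)..(2*π), (w φ)^2)
          = ∫ φ in (0:ℝ)..(2*π), (μ^2/4) * (Real.sin (φ/2))^2 := by
        apply intervalIntegral.integral_congr
        intro x hx
        rw [uIcc_of_le h2π.le] at hx
        show w x ^2 = (μ^2/4) * (Real.sin (x/2))^2
        rw [hwval x hx]; ring
      rw [hcong, intervalIntegral.integral_const_mul]
      have hsd : (∫ φ in (0:ℝ)..(2*π), (Real.sin (φ/2))^2) = π := by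
        have h0 := intervalIntegral.integral_comp_div (a := 0) (b := 2*π) (c := 2)
          (f := fun y => (Real.sin y)^2) two_ne_zero
        rw [show (0:ℝ)/2 = 0 by norm_num, show (2*π)/2 = π by ring] at h0
        rw [h0, integral_sin_sq]
        simp [Real.sin_pi]
        ring
      rw [hsd]
      ring
    rw [hDfull, hA, hD]
    ring
end

section
/- The function Φ(x) = e^x(π² + x² - 4x) - π² - x² - 4x satisfies Φ(0) = 0, Φ'(0) = π² - 8 > 0, Φ''(x) > 0 for all x ≥ 0; consequently Φ has no zeros in (0, ∞). -/
open Real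

private lemma phi1_deriv (x : ℝ) :
    HasDerivAt (fun x : ℝ => Real.exp x * (π ^ 2 + x ^ 2 - 4 * x) - π ^ 2 - x ^ 2 - 4 * x)
      (Real.exp x * (π ^ 2 + x ^ 2 - 2 * x - 4) - 2 * x - 4) x := by
  have hp : HasDerivAt (fun x : ℝ => π ^ 2 + x ^ 2 - 4 * x) (2 * x - 4) x := by
    have := ((hasDerivAt_pow 2 x).const_add (π ^ 2)).sub ((hasDerivAt_id x).const_mul 4)
    exact this.congr_deriv (by norm_num)
  have h := ((((Real.hasDerivAt_exp x).mul hp).sub_const (π ^ 2)).sub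
      (hasDerivAt_pow 2 x)).sub ((hasDerivAt_id x).const_mul 4)
  exact h.congr_deriv (by norm_num; ring)

private lemma phi2_deriv (x : ℝ) :
    HasDerivAt (fun x : ℝ => Real.exp x * (π ^ 2 + x ^ 2 - 2 * x - 4) - 2 * x - 4)
      (Real.exp x * (π ^ 2 + x ^ 2 - 6) - 2) x := by
  have hp : HasDerivAt (fun x : ℝ => π ^ 2 + x ^ 2 - 2 * x - 4) (2 * x - 2) x := by
    have := (((hasDerivAt_pow 2 x).const_add (π ^ 2)).sub
      ((hasDerivAt_id x).const_mul 2)).sub_const 4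
    simpa using this
  have h := (((Real.hasDerivAt_exp x).mul hp).sub ((hasDerivAt_id x).const_mul 2)).sub_const 4
  exact h.congr_deriv (by ring)

/-- Properties of `Φ(x) = eˣ(π² + x² - 4x) - π² - x² - 4x`: it vanishes at `0`,
has positive derivative `π² - 8` at `0`, is strictly convex on `[0,∞)`, and hence
has no zeros in `(0,∞)`. -/
theorem stmt1 :
    let Φ : ℝ → ℝ := fun x => Real.exp x * (π ^ 2 + x ^ 2 - 4 * x) - π ^ 2 - x ^ 2 - 4 * x
    Φ 0 = 0 ∧ deriv Φ 0 = π ^ 2 - 8 ∧ (0 : ℝ) < π ^ 2 - 8 ∧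
      (∀ x : ℝ, 0 ≤ x → 0 < deriv (deriv Φ) x) ∧
      (∀ x : ℝ, 0 < x → Φ x ≠ 0) := by
  intro Φ
  have hpi : (0 : ℝ) < π ^ 2 - 8 := by nlinarith [Real.pi_gt_three]
  have hd1 : deriv Φ = fun x => Real.exp x * (π ^ 2 + x ^ 2 - 2 * x - 4) - 2 * x - 4 := by
    funext x; exact (phi1_deriv x).deriv
  have hd2 : ∀ x : ℝ, deriv (deriv Φ) x = Real.exp x * (π ^ 2 + x ^ 2 - 6) - 2 := by
    intro x; rw [hd1]; exact (phi2_deriv x).deriv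
  have hd2pos : ∀ x : ℝ, 0 ≤ x → 0 < deriv (deriv Φ) x := by
    intro x hx
    rw [hd2]
    nlinarith [Real.one_le_exp hx, sq_nonneg x, Real.pi_gt_three]
  refine ⟨by simp [Φ], by rw [hd1]; simp; ring, hpi, hd2pos, ?_⟩
  -- deriv Φ is strictly monotone on [0,∞)
  have hmono1 : StrictMonoOn (deriv Φ) (Set.Ici 0) := by
    apply strictMonoOn_of_deriv_pos (convex_Ici 0)
    · rw [hd1]
      fun_prop
    · intro x hx
      rw [interior_Ici] at hx
      exact hd2pos x hx.le
  have hd1pos : ∀ x : ℝ, 0 < x → 0 < deriv Φ x := by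
    intro x hx
    have h0 : deriv Φ 0 = π ^ 2 - 8 := by rw [hd1]; simp; ring
    have := hmono1 (Set.self_mem_Ici) (Set.mem_Ici.mpr hx.le) hx
    rw [h0] at this
    linarith
  have hmono : StrictMonoOn Φ (Set.Ici 0) := by
    apply strictMonoOn_of_deriv_pos (convex_Ici 0)
    · fun_prop
    · intro x hx
      rw [interior_Ici] at hx
      exact hd1pos x hx
  intro x hx
  have := hmono (Set.self_mem_Ici) (Set.mem_Ici.mpr hx.le) hx
  have h0 : Φ 0 = 0 := by simp [Φ]
  rw [h0] at this
  exact ne_of_gt this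
end

section
/- Let Ψ(x) := 8x cos x - (π² - 4x²) sin x. Then Ψ'(x) = (4x² + 8 - π²) cos x, Ψ(0) = Ψ(π/2) = 0, and Ψ has no zero in the open interval (0, π/2). -/
open Real Set

/-- Properties of `Ψ(x) = 8x cos x - (π² - 4x²) sin x`: its derivative is
`(4x² + 8 - π²) cos x`, it vanishes at `0` and `π/2`, and has no zero in `(0, π/2)`. -/
theorem stmt2 :
    let Ψ : ℝ → ℝ := fun x => 8 * x * Real.cos x - (π ^ 2 - 4 * x ^ 2) * Real.sin x
    (∀ x : ℝ, deriv Ψ x = (4 * x ^ 2 + 8 - π ^ 2) * Real.cos x) ∧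
    Ψ 0 = 0 ∧ Ψ (π / 2) = 0 ∧
    (∀ x ∈ Ioo (0 : ℝ) (π / 2), Ψ x ≠ 0) := by
  intro Ψ
  have hΨ : ∀ x : ℝ, HasDerivAt Ψ ((4 * x ^ 2 + 8 - π ^ 2) * Real.cos x) x := by
    intro x
    have h1 : HasDerivAt (fun x : ℝ => 8 * x * Real.cos x)
        (8 * 1 * Real.cos x + 8 * x * (-Real.sin x)) x :=
      ((hasDerivAt_id x).const_mul (8 : ℝ)).mul (Real.hasDerivAt_cos x)
    have hp : HasDerivAt (fun x : ℝ => π ^ 2 - 4 * x ^ 2) (-(4 * (2 * x))) x := by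
      have := ((hasDerivAt_pow 2 x).const_mul (4 : ℝ)).const_sub (π ^ 2)
      refine this.congr_deriv ?_
      ring
    have h2 := hp.mul (Real.hasDerivAt_sin x)
    have h := h1.sub h2
    refine h.congr_deriv ?_
    ring
  have hΨ0 : Ψ 0 = 0 := by simp [Ψ]
  have hΨpi : Ψ (π / 2) = 0 := by
    simp [Ψ, Real.cos_pi_div_two, Real.sin_pi_div_two]
    ring
  have hπ : 8 < π ^ 2 := by nlinarith [Real.pi_gt_three]
  set c : ℝ := Real.sqrt (π ^ 2 - 8) / 2 with hc
  have hsq : Real.sqrt (π ^ 2 - 8) ^ 2 = π ^ 2 - 8 := Real.sq_sqrt (by linarith)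
  have hc0 : 0 < c := by
    have : 0 < Real.sqrt (π ^ 2 - 8) := Real.sqrt_pos.mpr (by linarith)
    positivity
  have hclt : c < π / 2 := by
    have h1 : Real.sqrt (π ^ 2 - 8) < π := by
      have := Real.sqrt_lt_sqrt (by linarith : (0:ℝ) ≤ π ^ 2 - 8) (by linarith : π ^ 2 - 8 < π ^ 2)
      rwa [Real.sqrt_sq Real.pi_pos.le] at this
    rw [hc]; linarith
  have hcont : Continuous Ψ := by fun_prop
  have hanti : StrictAntiOn Ψ (Icc 0 c) := by
    apply strictAntiOn_of_deriv_neg (convex_Icc 0 c) hcont.continuousOn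
    intro x hx
    rw [interior_Icc] at hx
    rw [(hΨ x).deriv]
    have hcos : 0 < Real.cos x :=
      Real.cos_pos_of_mem_Ioo ⟨by linarith [hx.1, Real.pi_pos], by linarith [hx.2, hclt]⟩
    have hx2 : x ^ 2 < c ^ 2 := by nlinarith [hx.1, hx.2]
    have : 4 * x ^ 2 + 8 - π ^ 2 < 0 := by
      have : c ^ 2 = (π ^ 2 - 8) / 4 := by rw [hc]; field_simp; linarith [hsq]
      nlinarith
    nlinarith
  have hmono : StrictMonoOn Ψ (Icc c (π / 2)) := by
    apply strictMonoOn_of_deriv_pos (convex_Icc c (π / 2)) hcont.continuousOn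
    intro x hx
    rw [interior_Icc] at hx
    rw [(hΨ x).deriv]
    have hcos : 0 < Real.cos x :=
      Real.cos_pos_of_mem_Ioo ⟨by linarith [hx.1, hc0, Real.pi_pos], hx.2⟩
    have hx2 : c ^ 2 < x ^ 2 := by nlinarith [hx.1, hx.2, hc0]
    have : 0 < 4 * x ^ 2 + 8 - π ^ 2 := by
      have : c ^ 2 = (π ^ 2 - 8) / 4 := by rw [hc]; field_simp; linarith [hsq]
      nlinarith
    nlinarith
  refine ⟨fun x => (hΨ x).deriv, hΨ0, hΨpi, ?_⟩
  intro x hx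
  rcases le_or_gt x c with h | h
  · have : Ψ x < Ψ 0 := hanti ⟨le_refl 0, hc0.le⟩ ⟨hx.1.le, h⟩ hx.1
    rw [hΨ0] at this
    linarith
  · have : Ψ x < Ψ (π / 2) := hmono ⟨h.le, hx.2.le⟩ ⟨hclt.le, le_refl _⟩ hx.2
    rw [hΨpi] at this
    linarith
end

section
/- If (ν_k)_{k≥1} denotes the increasing sequence of positive solutions of ν cos(νπ) = (π/2)(1/4 - ν²) sin(νπ), then ν_1 = 1/2, ν_2 ∈ (3/2, 2), ν_k ∈ (k-1, k) for every k ≥ 3, and lim_{k→∞} ν_k / k = 1. -/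
open Real Set Filter

noncomputable def Fo (x : ℝ) : ℝ :=
  x * Real.cos (x * π) - (π / 2) * (1 / 4 - x ^ 2) * Real.sin (x * π)

noncomputable def phi (t : ℝ) : ℝ := (π ^ 2 - 4 * t ^ 2) * Real.sin t - 8 * t * Real.cos t

lemma phi_hasDeriv (t : ℝ) : HasDerivAt phi ((π ^ 2 - 8 - 4 * t ^ 2) * Real.cos t) t := by
  have h1 : HasDerivAt (fun t : ℝ => (π ^ 2 - 4 * t ^ 2) * Real.sin t)
      ((-(4 * (2 * t))) * Real.sin t + (π ^ 2 - 4 * t ^ 2) * Real.cos t) t := by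
    exact (((hasDerivAt_pow 2 t).const_mul 4).const_sub (π ^ 2)).mul (Real.hasDerivAt_sin t)
      |>.congr_deriv (by ring)
  have h2 : HasDerivAt (fun t : ℝ => 8 * t * Real.cos t)
      (8 * Real.cos t + 8 * t * (-Real.sin t)) t := by
    exact (((hasDerivAt_id t).const_mul 8).mul (Real.hasDerivAt_cos t)).congr_deriv (by simp [id])
  exact (h1.sub h2).congr_deriv (by ring)

lemma phi_pos {t : ℝ} (h0 : 0 < t) (h1 : t < π / 2) : 0 < phi t := by
  have hpi := Real.pi_gt_three
  have h8 : (0:ℝ) < π ^ 2 - 8 := by nlinarith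
  set t₀ : ℝ := Real.sqrt (π ^ 2 - 8) / 2 with ht₀
  have ht₀sq : (2 * t₀) ^ 2 = π ^ 2 - 8 := by
    rw [ht₀]; rw [mul_div_cancel₀ _ (two_ne_zero)]; exact Real.sq_sqrt h8.le
  have ht₀pos : 0 < t₀ := by positivity
  have ht₀lt : t₀ < π / 2 := by nlinarith [ht₀sq, ht₀pos]
  have hcont : Continuous phi := by unfold phi; continuity
  rcases le_or_gt t t₀ with hle | hlt
  · have hmono : StrictMonoOn phi (Icc 0 t₀) := by
      apply strictMonoOn_of_deriv_pos (convex_Icc _ _) hcont.continuousOn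
      intro s hs
      rw [interior_Icc] at hs
      rw [(phi_hasDeriv s).deriv]
      have hcos : 0 < Real.cos s := Real.cos_pos_of_mem_Ioo ⟨by linarith [hs.1, Real.pi_pos], by linarith [hs.2, ht₀lt]⟩
      have : 4 * s ^ 2 < π ^ 2 - 8 := by nlinarith [hs.1, hs.2, ht₀sq, ht₀pos]
      nlinarith
    have := hmono ⟨le_refl 0, ht₀pos.le⟩ ⟨h0.le, hle⟩ h0
    simpa [phi] using this
  · have hanti : StrictAntiOn phi (Icc t₀ (π / 2)) := by
      apply strictAntiOn_of_deriv_neg (convex_Icc _ _) hcont.continuousOn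
      intro s hs
      rw [interior_Icc] at hs
      rw [(phi_hasDeriv s).deriv]
      have hcos : 0 < Real.cos s := Real.cos_pos_of_mem_Ioo ⟨by linarith [hs.1, ht₀pos, Real.pi_pos], hs.2⟩
      have : π ^ 2 - 8 < 4 * s ^ 2 := by nlinarith [hs.1, hs.2, ht₀sq, ht₀pos]
      nlinarith
    have := hanti ⟨hlt.le, h1.le⟩ ⟨ht₀lt.le, le_refl _⟩ h1
    have hval : phi (π / 2) = 0 := by
      simp [phi, Real.sin_pi_div_two, Real.cos_pi_div_two]; ring
    linarith [this, hval.symm.le]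

lemma Fo_cont : Continuous Fo := by unfold Fo; continuity

lemma Fo_neg_small {x : ℝ} (h0 : 0 < x) (h1 : x < 1/2) : Fo x < 0 := by
  have hpi := Real.pi_pos
  have hp : 0 < phi (x * π) := phi_pos (by positivity) (by nlinarith)
  have key : 8 * π * Fo x = -(phi (x * π)) := by unfold Fo phi; ring_nf
  nlinarith

noncomputable def psi (x : ℝ) : ℝ :=
  Real.cos (x * π) / Real.sin (x * π) + (π / 2) * (x - 1 / (4 * x))

lemma psi_hasDeriv {x : ℝ} (hx : x ≠ 0) (hs : Real.sin (x * π) ≠ 0) :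
    HasDerivAt psi (-π / (Real.sin (x * π)) ^ 2 + (π / 2) * (1 + 1 / (4 * x ^ 2))) x := by
  have hc : HasDerivAt (fun x : ℝ => Real.cos (x * π)) (-Real.sin (x * π) * π) x :=
    by have := (Real.hasDerivAt_cos (x * π)).comp x (hasDerivAt_mul_const π); exact this
  have hsn : HasDerivAt (fun x : ℝ => Real.sin (x * π)) (Real.cos (x * π) * π) x :=
    by have := (Real.hasDerivAt_sin (x * π)).comp x (hasDerivAt_mul_const π); exact this
  have hq := hc.div hsn hs
  have hinv : HasDerivAt (fun x : ℝ => 1 / (4 * x)) (-(4 / (4 * x) ^ 2)) x := by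
    have hfun : (fun x : ℝ => 1 / (4 * x)) = (fun y : ℝ => 4 * id y)⁻¹ := by
      funext y; simp [one_div]
    rw [hfun]
    exact ((hasDerivAt_id x).const_mul 4).inv (by simpa using hx) |>.congr_deriv (by simp [id]; rw [neg_div])
  have hlin : HasDerivAt (fun x : ℝ => (π / 2) * (x - 1 / (4 * x)))
      ((π / 2) * (1 - -(4 / (4 * x) ^ 2))) x := ((hasDerivAt_id x).sub hinv).const_mul (π / 2)
  have := hq.add hlin
  refine this.congr_deriv ?_
  have h1 : Real.sin (x * π) ^ 2 + Real.cos (x * π) ^ 2 = 1 := Real.sin_sq_add_cos_sq _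
  have e1 : (-Real.sin (x * π) * π * Real.sin (x * π) - Real.cos (x * π) * (Real.cos (x * π) * π)) = -π := by
    linear_combination (-π) * h1
  rw [e1]
  field_simp
  ring

lemma psi_anti {s : Set ℝ} (hconv : Convex ℝ s)
    (hpos : ∀ x ∈ s, 0 < x ∧ Real.sin (x * π) ≠ 0)
    (hint : ∀ x ∈ interior s, 1/2 < x) : StrictAntiOn psi s := by
  apply strictAntiOn_of_deriv_neg hconv
  · intro x hx
    exact ((psi_hasDeriv (hpos x hx).1.ne' (hpos x hx).2).continuousAt).continuousWithinAt
  · intro x hx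
    have hx' := hpos x (interior_subset hx)
    rw [(psi_hasDeriv hx'.1.ne' hx'.2).deriv]
    have h2 : 1/2 < x := hint x hx
    have hs1 : Real.sin (x * π) ^ 2 ≤ 1 := by
      nlinarith [Real.neg_one_le_sin (x * π), Real.sin_le_one (x * π)]
    have hs0 : 0 < Real.sin (x * π) ^ 2 := pow_two_pos_of_ne_zero hx'.2
    have hpi := Real.pi_pos
    have hA : π ≤ π / Real.sin (x * π) ^ 2 := by
      rw [le_div_iff₀ hs0]; nlinarith
    have hB : (π / 2) * (1 + 1 / (4 * x ^ 2)) < π := by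
      have : 1 / (4 * x ^ 2) < 1 := by
        rw [div_lt_one (by positivity)]; nlinarith
      nlinarith
    have : -π / Real.sin (x * π) ^ 2 = -(π / Real.sin (x * π) ^ 2) := by ring
    rw [this]; linarith

lemma Fo_eq_psi {x : ℝ} (hx : x ≠ 0) (hs : Real.sin (x * π) ≠ 0) :
    Fo x = x * Real.sin (x * π) * psi x := by
  unfold Fo psi
  field_simp
  ring

lemma sin_pos_small {x : ℝ} (h0 : 0 < x) (h1 : x < 1) : 0 < Real.sin (x * π) :=
  Real.sin_pos_of_pos_of_lt_pi (by positivity) (by nlinarith [Real.pi_pos])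

lemma psi_half : psi (1/2) = 0 := by
  have h : (1/2 : ℝ) * π = π / 2 := by ring
  unfold psi
  rw [h, Real.cos_pi_div_two]
  norm_num

lemma Fo_neg_mid {x : ℝ} (h0 : 1/2 < x) (h1 : x < 1) : Fo x < 0 := by
  have hanti : StrictAntiOn psi (Ico (1/2 : ℝ) 1) := by
    apply psi_anti (convex_Ico _ _)
    · intro y hy
      exact ⟨by linarith [hy.1], (sin_pos_small (by linarith [hy.1]) hy.2).ne'⟩
    · intro y hy
      rw [interior_Ico] at hy
      exact hy.1
  have hlt : psi x < psi (1/2) :=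
    hanti ⟨le_refl _, by norm_num⟩ ⟨h0.le, h1⟩ h0
  rw [psi_half] at hlt
  have hsin := sin_pos_small (by linarith) h1
  rw [Fo_eq_psi (x := x) (by linarith) hsin.ne']
  exact mul_neg_of_pos_of_neg (mul_pos (by linarith) hsin) hlt

lemma Fo_ne_low {n : ℕ} (hn : 1 ≤ n) {x : ℝ} (hx1 : (n : ℝ) ≤ x) (hx2 : x ≤ (n : ℝ) + 1/2) :
    Fo x ≠ 0 := by
  have hpi := Real.pi_pos
  set u : ℝ := x - n with hu
  have hu0 : 0 ≤ u := by simp [hu]; linarith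
  have hu2 : u ≤ 1/2 := by simp [hu]; linarith
  have hxu : x * π = u * π + n * π := by ring
  have hcos : Real.cos (x * π) = (-1) ^ n * Real.cos (u * π) := by
    rw [hxu, Real.cos_add_nat_mul_pi]
  have hsin : Real.sin (x * π) = (-1) ^ n * Real.sin (u * π) := by
    rw [hxu, Real.sin_add_nat_mul_pi]
  have hn1 : (1 : ℝ) ≤ (n : ℝ) := by exact_mod_cast hn
  have hcu : 0 ≤ Real.cos (u * π) := by
    apply Real.cos_nonneg_of_mem_Icc
    constructor <;> nlinarith
  have hsu : 0 ≤ Real.sin (u * π) := by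
    apply Real.sin_nonneg_of_nonneg_of_le_pi <;> nlinarith
  have hx14 : 0 ≤ x^2 - 1/4 := by nlinarith
  have t2 : 0 ≤ (π/2) * (x^2 - 1/4) * Real.sin (u * π) :=
    mul_nonneg (mul_nonneg (by positivity) hx14) hsu
  have t1 : 0 ≤ x * Real.cos (u * π) := mul_nonneg (by linarith) hcu
  have hB : 0 < x * Real.cos (u * π) + (π/2) * (x^2 - 1/4) * Real.sin (u * π) := by
    rcases lt_or_eq_of_le hu2 with h | h
    · have hcp : 0 < Real.cos (u * π) := Real.cos_pos_of_mem_Ioo ⟨by nlinarith, by nlinarith⟩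
      have : 0 < x * Real.cos (u * π) := mul_pos (by linarith) hcp
      linarith
    · have hs1 : Real.sin (u * π) = 1 := by
        rw [h, show (1/2 : ℝ) * π = π / 2 by ring, Real.sin_pi_div_two]
      have hgt : (0:ℝ) < x ^ 2 - 1/4 := by nlinarith
      have : 0 < (π/2) * (x^2 - 1/4) * Real.sin (u * π) := by
        rw [hs1, mul_one]; exact mul_pos (by positivity) hgt
      linarith
  have hFo : Fo x = (-1) ^ n * (x * Real.cos (u * π) + (π/2) * (x^2 - 1/4) * Real.sin (u * π)) := by
    unfold Fo; rw [hcos, hsin]; ring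
  rcases Nat.even_or_odd n with h | h
  · rw [hFo, h.neg_one_pow, one_mul]; exact hB.ne'
  · rw [hFo, h.neg_one_pow, neg_one_mul, ne_eq, neg_eq_zero]
    exact hB.ne'

lemma sin_ne_mid {n : ℕ} {x : ℝ} (hx : x ∈ Ioo ((n : ℝ)) ((n : ℝ) + 1)) :
    Real.sin (x * π) ≠ 0 := by
  intro h
  rw [Real.sin_eq_zero_iff] at h
  obtain ⟨k, hk⟩ := h
  have hpi := Real.pi_pos
  have hxk : x = (k : ℝ) := by
    exact (mul_right_cancel₀ hpi.ne' hk).symm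
  have h1 : (n : ℤ) < k := by exact_mod_cast hxk ▸ hx.1
  have h2 : (k : ℝ) < (n : ℝ) + 1 := hxk ▸ hx.2
  have h2' : k < (n : ℤ) + 1 := by exact_mod_cast h2
  omega

lemma Fo_half_val (n : ℕ) :
    Fo ((n : ℝ) + 1/2) = (-1) ^ n * ((π/2) * (((n:ℝ) + 1/2)^2 - 1/4)) := by
  have h1 : ((n : ℝ) + 1/2) * π = π/2 + n * π := by ring
  unfold Fo
  rw [h1, Real.cos_add_nat_mul_pi, Real.sin_add_nat_mul_pi, Real.cos_pi_div_two,
    Real.sin_pi_div_two]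
  ring

lemma Fo_int_val (n : ℕ) : Fo ((n : ℝ) + 1) = (-1) ^ (n + 1) * ((n : ℝ) + 1) := by
  have h1 : ((n : ℝ) + 1) * π = 0 + (n + 1 : ℕ) * π := by push_cast; ring
  unfold Fo
  rw [h1, Real.cos_add_nat_mul_pi, Real.sin_add_nat_mul_pi, Real.cos_zero, Real.sin_zero]
  ring

lemma Fo_exists_zero (n : ℕ) (hn : 1 ≤ n) :
    ∃ x ∈ Ioo ((n : ℝ) + 1/2) ((n : ℝ) + 1), Fo x = 0 := by
  have hpi := Real.pi_pos
  have hn1 : (1 : ℝ) ≤ (n : ℝ) := by exact_mod_cast hn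
  have hle : (n : ℝ) + 1/2 ≤ (n : ℝ) + 1 := by linarith
  have hcont : ContinuousOn Fo (Icc ((n : ℝ) + 1/2) ((n : ℝ) + 1)) :=
    Fo_cont.continuousOn
  have hBpos : 0 < (π/2) * (((n:ℝ) + 1/2)^2 - 1/4) := by
    have : (0:ℝ) < ((n:ℝ) + 1/2)^2 - 1/4 := by nlinarith
    exact mul_pos (by positivity) this
  rcases Nat.even_or_odd n with h | h
  · have ha : Fo ((n : ℝ) + 1/2) = (π/2) * (((n:ℝ) + 1/2)^2 - 1/4) := by
      rw [Fo_half_val, h.neg_one_pow, one_mul]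
    have hb : Fo ((n : ℝ) + 1) = -((n : ℝ) + 1) := by
      rw [Fo_int_val]
      have : Odd (n + 1) := h.add_one
      rw [this.neg_one_pow, neg_one_mul]
    have h0 : (0:ℝ) ∈ Ioo (Fo ((n : ℝ) + 1)) (Fo ((n : ℝ) + 1/2)) := by
      rw [ha, hb]; constructor <;> [linarith; linarith]
    obtain ⟨x, hx, hfx⟩ := intermediate_value_Ioo' hle hcont h0
    exact ⟨x, hx, hfx⟩
  · have ha : Fo ((n : ℝ) + 1/2) = -((π/2) * (((n:ℝ) + 1/2)^2 - 1/4)) := by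
      rw [Fo_half_val, h.neg_one_pow, neg_one_mul]
    have hb : Fo ((n : ℝ) + 1) = ((n : ℝ) + 1) := by
      rw [Fo_int_val]
      have : Even (n + 1) := h.add_one
      rw [this.neg_one_pow, one_mul]
    have h0 : (0:ℝ) ∈ Ioo (Fo ((n : ℝ) + 1/2)) (Fo ((n : ℝ) + 1)) := by
      rw [ha, hb]; constructor <;> [linarith; linarith]
    obtain ⟨x, hx, hfx⟩ := intermediate_value_Ioo hle hcont h0
    exact ⟨x, hx, hfx⟩

lemma Fo_uniq {n : ℕ} (hn : 1 ≤ n) {x y : ℝ}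
    (hx : x ∈ Ioo ((n : ℝ)) ((n : ℝ) + 1)) (hy : y ∈ Ioo ((n : ℝ)) ((n : ℝ) + 1))
    (hfx : Fo x = 0) (hfy : Fo y = 0) : x = y := by
  have hn1 : (1 : ℝ) ≤ (n : ℝ) := by exact_mod_cast hn
  have hanti : StrictAntiOn psi (Ioo ((n : ℝ)) ((n : ℝ) + 1)) := by
    apply psi_anti (convex_Ioo _ _)
    · intro z hz
      exact ⟨by linarith [hz.1], sin_ne_mid hz⟩
    · intro z hz
      rw [isOpen_Ioo.interior_eq] at hz
      linarith [hz.1]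
  have key : ∀ z ∈ Ioo ((n : ℝ)) ((n : ℝ) + 1), Fo z = 0 → psi z = 0 := by
    intro z hz hfz
    have hz0 : (0:ℝ) < z := by linarith [hz.1]
    have hsz := sin_ne_mid hz
    have := Fo_eq_psi hz0.ne' hsz
    rw [hfz] at this
    rcases mul_eq_zero.mp this.symm with h | h
    · rcases mul_eq_zero.mp h with h' | h'
      · exact absurd h' hz0.ne'
      · exact absurd h' hsz
    · exact h
  exact hanti.injOn hx hy ((key x hx hfx).trans (key y hy hfy).symm)

lemma Fo_half : Fo (1/2) = 0 := by
  unfold Fo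
  rw [show (1/2:ℝ) * π = π/2 by ring, Real.cos_pi_div_two]
  ring

lemma Fo_classify {x : ℝ} (hx : 0 < x) (hfx : Fo x = 0) :
    x = 1/2 ∨ ∃ n : ℕ, 1 ≤ n ∧ x ∈ Ioo ((n:ℝ) + 1/2) ((n:ℝ) + 1) := by
  rcases lt_trichotomy x (1/2) with h | h | h
  · exact absurd hfx (Fo_neg_small hx h).ne
  · exact Or.inl h
  rcases lt_or_ge x 1 with h1 | h1
  · exact absurd hfx (Fo_neg_mid h h1).ne
  right
  set n : ℕ := ⌊x⌋₊ with hn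
  have hn1 : 1 ≤ n := Nat.le_floor (by exact_mod_cast h1)
  have hfl : (n : ℝ) ≤ x := Nat.floor_le hx.le
  have hfu : x < (n : ℝ) + 1 := Nat.lt_floor_add_one x
  rcases le_or_gt x ((n : ℝ) + 1/2) with h2 | h2
  · exact absurd hfx (Fo_ne_low hn1 hfl h2)
  · exact ⟨n, hn1, h2, hfu⟩

/-- If `(ν_k)_{k≥1}` is the increasing enumeration of the positive solutions of
`ν cos(νπ) = (π/2)(1/4 - ν²) sin(νπ)`, then `ν₁ = 1/2`, `ν₂ ∈ (3/2, 2)`,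
`ν_k ∈ (k-1, k)` for `k ≥ 3`, and `ν_k / k → 1`. -/
theorem stmt4 (ν : ℕ → ℝ)
    (hmono : ∀ j k : ℕ, 1 ≤ j → j < k → ν j < ν k)
    (hsol : ∀ k : ℕ, 1 ≤ k → 0 < ν k ∧
      ν k * Real.cos (ν k * π) = (π / 2) * (1 / 4 - (ν k) ^ 2) * Real.sin (ν k * π))
    (hall : ∀ x : ℝ, 0 < x →
      x * Real.cos (x * π) = (π / 2) * (1 / 4 - x ^ 2) * Real.sin (x * π) →
      ∃ k : ℕ, 1 ≤ k ∧ ν k = x) :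
    ν 1 = 1 / 2 ∧ ν 2 ∈ Ioo (3 / 2 : ℝ) 2 ∧
    (∀ k : ℕ, 3 ≤ k → ν k ∈ Ioo ((k : ℝ) - 1) (k : ℝ)) ∧
    Tendsto (fun k : ℕ => ν k / (k : ℝ)) atTop (nhds 1) := by
  have hF : ∀ k, 1 ≤ k → Fo (ν k) = 0 := fun k hk => sub_eq_zero.mpr (hsol k hk).2
  have hallF : ∀ x : ℝ, 0 < x → Fo x = 0 → ∃ k, 1 ≤ k ∧ ν k = x :=
    fun x hx h => hall x hx (sub_eq_zero.mp h)
  -- the roots r n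
  have E : ∀ n : ℕ, ∃ x : ℝ, 1 ≤ n → x ∈ Ioo ((n:ℝ) + 1/2) ((n:ℝ) + 1) ∧ Fo x = 0 := by
    intro n
    by_cases h : 1 ≤ n
    · obtain ⟨x, h1, h2⟩ := Fo_exists_zero n h
      exact ⟨x, fun _ => ⟨h1, h2⟩⟩
    · exact ⟨0, fun hc => absurd hc h⟩
  choose r hr using E
  have hrmem : ∀ n : ℕ, 1 ≤ n → r n ∈ Ioo ((n:ℝ) + 1/2) ((n:ℝ) + 1) := fun n hn => (hr n hn).1
  have hrF : ∀ n, 1 ≤ n → Fo (r n) = 0 := fun n hn => (hr n hn).2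
  have hrpos : ∀ n, 1 ≤ n → 0 < r n := by
    intro n hn
    have h := (hrmem n hn).1
    have : (1:ℝ) ≤ (n:ℝ) := by exact_mod_cast hn
    linarith
  have hrbig : ∀ n, 1 ≤ n → 3/2 < r n := by
    intro n hn
    have h := (hrmem n hn).1
    have : (1:ℝ) ≤ (n:ℝ) := by exact_mod_cast hn
    linarith
  have rmono : ∀ m p, 1 ≤ m → m < p → r m < r p := by
    intro m p hm hmp
    have h1 := (hrmem m hm).2
    have h2 := (hrmem p (by omega)).1
    have : (m:ℝ) + 1 ≤ (p:ℝ) := by exact_mod_cast hmp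
    linarith
  have classify : ∀ x : ℝ, 0 < x → Fo x = 0 → x = 1/2 ∨ ∃ n, 1 ≤ n ∧ x = r n := by
    intro x hx hfx
    rcases Fo_classify hx hfx with h | ⟨n, hn, hmem⟩
    · exact Or.inl h
    right
    refine ⟨n, hn, ?_⟩
    have hn1 : (1:ℝ) ≤ (n:ℝ) := by exact_mod_cast hn
    have hx' : x ∈ Ioo ((n:ℝ)) ((n:ℝ) + 1) := ⟨by linarith [hmem.1], hmem.2⟩
    have hr' : r n ∈ Ioo ((n:ℝ)) ((n:ℝ) + 1) := by
      have := hrmem n hn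
      exact ⟨by linarith [this.1], this.2⟩
    exact Fo_uniq hn hx' hr' hfx (hrF n hn)
  have hcomp : ∀ j k, 1 ≤ j → 1 ≤ k → ν j < ν k → j < k := by
    intro j k hj hk hlt
    by_contra hc
    push_neg at hc
    rcases lt_or_eq_of_le hc with h | h
    · exact absurd (hmono k j hk h) (by linarith)
    · rw [h] at hlt; exact lt_irrefl _ hlt
  -- ν 1 = 1/2
  have hν1 : ν 1 = 1/2 := by
    obtain ⟨k, hk, hνk⟩ := hallF (1/2) (by norm_num) Fo_half
    rcases lt_or_eq_of_le hk with h | h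
    · have hlt : ν 1 < 1/2 := hνk ▸ hmono 1 k (le_refl _) h
      exact absurd (hF 1 (le_refl _)) (Fo_neg_small (hsol 1 (le_refl _)).1 hlt).ne
    · exact h ▸ hνk
  -- ν (n+1) = r n
  have hstep : ∀ n : ℕ, 1 ≤ n → ν (n + 1) = r n := by
    intro n hn
    induction n with
    | zero => omega
    | succ m ih =>
      -- show ν (m+2) = r (m+1)
      have hprev : ν (m + 1) = if m = 0 then 1/2 else r m := by
        rcases Nat.eq_zero_or_pos m with h | h
        · simp [h, hν1]
        · rw [if_neg (by omega)]
          exact ih h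
      have hgt : 1/2 < ν (m + 2) := by
        have h1 : ν (m + 1) < ν (m + 2) := hmono (m+1) (m+2) (by omega) (by omega)
        rcases Nat.eq_zero_or_pos m with h | h
        · rw [hprev, if_pos h] at h1; linarith
        · rw [hprev, if_neg (by omega)] at h1
          linarith [hrbig m h]
      rcases classify (ν (m + 2)) (hsol (m+2) (by omega)).1 (hF (m+2) (by omega)) with h | ⟨p, hp, hνp⟩
      · linarith [h ▸ hgt]
      -- p ≥ m + 1
      have hpge : m + 1 ≤ p := by
        by_contra hc
        push_neg at hc
        rcases Nat.eq_zero_or_pos m with h | h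
        · omega
        · -- p ≤ m, so r p ≤ r m < ν (m+2) = r p?? derive contradiction: r p < r m or =
          have hν : ν (m+1) = r m := by rw [hprev, if_neg (by omega)]
          have h1 : ν (m + 1) < ν (m + 2) := hmono (m+1) (m+2) (by omega) (by omega)
          rw [hν, hνp] at h1
          rcases lt_or_eq_of_le (Nat.lt_succ_iff.mp hc) with h2 | h2
          · exact absurd (rmono p m hp h2) (by linarith)
          · rw [h2] at h1; exact lt_irrefl _ h1
      rcases lt_or_eq_of_le hpge with hplt | hpeq
      · -- p ≥ m+2 : contradiction via r (m+1)
        exfalso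
        obtain ⟨k, hk, hνk⟩ := hallF (r (m+1)) (hrpos (m+1) (by omega)) (hrF (m+1) (by omega))
        have hlow : ν (m+1) < ν k := by
          rw [hνk]
          rcases Nat.eq_zero_or_pos m with h | h
          · rw [hprev, if_pos h]; linarith [hrbig (m+1) (by omega)]
          · rw [hprev, if_neg (by omega)]; exact rmono m (m+1) h (by omega)
        have hhigh : ν k < ν (m + 2) := by
          rw [hνk, hνp]; exact rmono (m+1) p (by omega) hplt
        have c1 := hcomp (m+1) k (by omega) hk hlow
        have c2 := hcomp k (m+2) hk (by omega) hhigh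
        omega
      · rw [hνp, ← hpeq]
  -- conclusions
  have hν2 : ν 2 = r 1 := hstep 1 (le_refl _)
  have hioo : ∀ k : ℕ, 3 ≤ k → ν k ∈ Ioo ((k : ℝ) - 1) (k : ℝ) := by
    intro k hk
    have hk1 : k - 1 + 1 = k := by omega
    have hν : ν k = r (k - 1) := by rw [← hk1]; exact hstep (k-1) (by omega)
    have hmem := hrmem (k-1) (by omega)
    have hcast : ((k - 1 : ℕ) : ℝ) = (k : ℝ) - 1 := by
      have : (1:ℕ) ≤ k := by omega
      push_cast [Nat.cast_sub this]
      ring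
    rw [hν]
    rw [hcast] at hmem
    exact ⟨by linarith [hmem.1], by linarith [hmem.2]⟩
  refine ⟨hν1, ?_, hioo, ?_⟩
  · have hmem := hrmem 1 (le_refl _)
    rw [hν2]
    norm_num at hmem ⊢
    exact ⟨by linarith [hmem.1], hmem.2⟩
  · -- limit
    have hg : Tendsto (fun k : ℕ => ((k:ℝ) - 1) / k) atTop (nhds 1) := by
      have h0 : Tendsto (fun k : ℕ => 1 - 1 / (k:ℝ)) atTop (nhds 1) := by
        have := (tendsto_one_div_atTop_nhds_zero_nat : Tendsto (fun n : ℕ => 1 / (n : ℝ)) atTop (nhds 0))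
        have := this.const_sub 1
        simpa using this
      apply h0.congr'
      filter_upwards [eventually_ge_atTop 1] with k hk
      have : (k:ℝ) ≠ 0 := Nat.cast_ne_zero.mpr (by omega)
      field_simp
    apply tendsto_of_tendsto_of_tendsto_of_le_of_le' hg tendsto_const_nhds
    · filter_upwards [eventually_ge_atTop 3] with k hk
      have hkpos : (0:ℝ) < (k:ℝ) := by exact_mod_cast (by omega : 0 < k)
      have h1 := (hioo k hk).1
      gcongr
    · filter_upwards [eventually_ge_atTop 3] with k hk
      have hkpos : (0:ℝ) < (k:ℝ) := by exact_mod_cast (by omega : 0 < k)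
      have := (hioo k hk).2
      exact (div_le_one hkpos).mpr this.le
end

section
/- There exists η > 0 such that: for every continuous convex nonnegative function h on [0,3] satisfying h'' ≥ ĉ h in the distributional sense (for a fixed ĉ > 0), if ∫₁² h ≥ (1-η)∫₀¹ h, then ∫₂³ h ≥ (1+η)∫₁² h. -/
set_option maxHeartbeats 4000000
open Real Set intervalIntegral

noncomputable section

private def qq (t : ℝ) : ℝ := (max t 0)^2

private lemma qq_nonneg (t : ℝ) : 0 ≤ qq t := sq_nonneg _
private lemma qq_of_nonneg {t : ℝ} (h : 0 ≤ t) : qq t = t^2 := by rw [qq, max_eq_left h]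
private lemma qq_of_nonpos {t : ℝ} (h : t ≤ 0) : qq t = 0 := by
  rw [qq, max_eq_right h]; ring

private lemma qq_continuous : Continuous qq :=
  (continuous_id.max continuous_const).pow 2

private def dq (ε t : ℝ) : ℝ := qq (t+ε) - 2 * qq t + qq (t-ε)

private lemma dq_nonneg {ε : ℝ} (hε : 0 ≤ ε) (t : ℝ) : 0 ≤ dq ε t := by
  unfold dq
  rcases le_total (t+ε) 0 with h1 | h1
  · rw [qq_of_nonpos h1, qq_of_nonpos (by linarith : t ≤ 0),
      qq_of_nonpos (by linarith : t - ε ≤ 0)]; norm_num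
  · rcases le_total t 0 with h2 | h2
    · rw [qq_of_nonneg (by linarith : 0 ≤ t+ε), qq_of_nonpos h2,
        qq_of_nonpos (by linarith : t - ε ≤ 0)]
      nlinarith [sq_nonneg (t+ε)]
    · rcases le_total (t-ε) 0 with h3 | h3
      · rw [qq_of_nonneg (by linarith : 0 ≤ t+ε), qq_of_nonneg h2, qq_of_nonpos h3]
        nlinarith
      · rw [qq_of_nonneg (by linarith : 0 ≤ t+ε), qq_of_nonneg h2, qq_of_nonneg h3]
        nlinarith

private lemma dq_le {ε : ℝ} (hε : 0 ≤ ε) (t : ℝ) : dq ε t ≤ 2*ε^2 := by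
  unfold dq
  rcases le_total (t+ε) 0 with h1 | h1
  · rw [qq_of_nonpos h1, qq_of_nonpos (by linarith : t ≤ 0),
      qq_of_nonpos (by linarith : t - ε ≤ 0)]; nlinarith
  · rcases le_total t 0 with h2 | h2
    · rw [qq_of_nonneg (by linarith : 0 ≤ t+ε), qq_of_nonpos h2,
        qq_of_nonpos (by linarith : t - ε ≤ 0)]
      nlinarith
    · rcases le_total (t-ε) 0 with h3 | h3
      · rw [qq_of_nonneg (by linarith : 0 ≤ t+ε), qq_of_nonneg h2, qq_of_nonpos h3]
        nlinarith [sq_nonneg (t-ε)]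
      · rw [qq_of_nonneg (by linarith : 0 ≤ t+ε), qq_of_nonneg h2, qq_of_nonneg h3]
        nlinarith

private lemma dq_of_ge {ε t : ℝ} (hε : 0 ≤ ε) (h : ε ≤ t) : dq ε t = 2*ε^2 := by
  unfold dq
  rw [qq_of_nonneg (by linarith : 0 ≤ t+ε), qq_of_nonneg (by linarith : 0 ≤ t),
    qq_of_nonneg (by linarith : 0 ≤ t-ε)]
  ring

private lemma dq_of_le {ε t : ℝ} (hε : 0 ≤ ε) (h : t ≤ -ε) : dq ε t = 0 := by
  unfold dq
  rw [qq_of_nonpos (by linarith : t+ε ≤ 0), qq_of_nonpos (by linarith : t ≤ 0),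
    qq_of_nonpos (by linarith : t-ε ≤ 0)]
  ring

/-- The quadratic B-spline on `[0,3]`. -/
private def psif (y : ℝ) : ℝ := (qq y - 3*qq (y-1) + 3*qq (y-2) - qq (y-3))/2

private lemma psif_continuous : Continuous psif := by
  have : Continuous qq := qq_continuous
  unfold psif
  fun_prop [qq_continuous]

private lemma psif_nonneg (y : ℝ) : 0 ≤ psif y := by
  unfold psif
  rcases le_total y 0 with h0 | h0
  · rw [qq_of_nonpos h0, qq_of_nonpos (by linarith : y-1 ≤ 0),
      qq_of_nonpos (by linarith : y-2 ≤ 0), qq_of_nonpos (by linarith : y-3 ≤ 0)]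
    norm_num
  · rcases le_total y 1 with h1 | h1
    · rw [qq_of_nonneg h0, qq_of_nonpos (by linarith : y-1 ≤ 0),
        qq_of_nonpos (by linarith : y-2 ≤ 0), qq_of_nonpos (by linarith : y-3 ≤ 0)]
      nlinarith [sq_nonneg y]
    · rcases le_total y 2 with h2 | h2
      · rw [qq_of_nonneg h0, qq_of_nonneg (by linarith : (0:ℝ) ≤ y-1),
          qq_of_nonpos (by linarith : y-2 ≤ 0), qq_of_nonpos (by linarith : y-3 ≤ 0)]
        nlinarith [mul_nonneg (by linarith : (0:ℝ) ≤ y-1) (by linarith : (0:ℝ) ≤ 2-y)]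
      · rcases le_total y 3 with h3 | h3
        · rw [qq_of_nonneg h0, qq_of_nonneg (by linarith : (0:ℝ) ≤ y-1),
            qq_of_nonneg (by linarith : (0:ℝ) ≤ y-2), qq_of_nonpos (by linarith : y-3 ≤ 0)]
          nlinarith [sq_nonneg (y-3)]
        · rw [qq_of_nonneg h0, qq_of_nonneg (by linarith : (0:ℝ) ≤ y-1),
            qq_of_nonneg (by linarith : (0:ℝ) ≤ y-2), qq_of_nonneg (by linarith : (0:ℝ) ≤ y-3)]
          nlinarith

private lemma psif_ge {y : ℝ} (h1 : 1/10 ≤ y) (h2 : y ≤ 29/10) : 1/200 ≤ psif y := by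
  unfold psif
  rcases le_total y 1 with ha | ha
  · rw [qq_of_nonneg (by linarith), qq_of_nonpos (by linarith : y-1 ≤ 0),
      qq_of_nonpos (by linarith : y-2 ≤ 0), qq_of_nonpos (by linarith : y-3 ≤ 0)]
    nlinarith
  · rcases le_total y 2 with hb | hb
    · rw [qq_of_nonneg (by linarith), qq_of_nonneg (by linarith : (0:ℝ) ≤ y-1),
        qq_of_nonpos (by linarith : y-2 ≤ 0), qq_of_nonpos (by linarith : y-3 ≤ 0)]
      nlinarith [mul_nonneg (by linarith : (0:ℝ) ≤ y-1) (by linarith : (0:ℝ) ≤ 2-y)]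
    · rw [qq_of_nonneg (by linarith), qq_of_nonneg (by linarith : (0:ℝ) ≤ y-1),
        qq_of_nonneg (by linarith : (0:ℝ) ≤ y-2), qq_of_nonpos (by linarith : y-3 ≤ 0)]
      nlinarith

private lemma psif_eq_left {y : ℝ} (h0 : 0 ≤ y) (h1 : y ≤ 1) : psif y = y^2/2 := by
  unfold psif
  rw [qq_of_nonneg h0, qq_of_nonpos (by linarith : y-1 ≤ 0),
    qq_of_nonpos (by linarith : y-2 ≤ 0), qq_of_nonpos (by linarith : y-3 ≤ 0)]
  ring

private lemma psif_eq_right {y : ℝ} (h0 : 2 ≤ y) (h1 : y ≤ 3) : psif y = (3-y)^2/2 := by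
  unfold psif
  rw [qq_of_nonneg (by linarith), qq_of_nonneg (by linarith : (0:ℝ) ≤ y-1),
    qq_of_nonneg (by linarith : (0:ℝ) ≤ y-2), qq_of_nonpos (by linarith : y-3 ≤ 0)]
  ring

private lemma dpsi_eq (ε y : ℝ) :
    psif (y+ε) - 2*psif y + psif (y-ε)
      = (dq ε y - 3*dq ε (y-1) + 3*dq ε (y-2) - dq ε (y-3))/2 := by
  unfold psif dq
  have e1 : y + ε - 1 = y - 1 + ε := by ring
  have e2 : y + ε - 2 = y - 2 + ε := by ring
  have e3 : y + ε - 3 = y - 3 + ε := by ring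
  have e4 : y - ε - 1 = y - 1 - ε := by ring
  have e5 : y - ε - 2 = y - 2 - ε := by ring
  have e6 : y - ε - 3 = y - 3 - ε := by ring
  rw [e1, e2, e3, e4, e5, e6]
  ring

private lemma dpsi_le {ε : ℝ} (hε : 0 ≤ ε) (y : ℝ) :
    psif (y+ε) - 2*psif y + psif (y-ε) ≤ 4*ε^2 := by
  rw [dpsi_eq]
  have h1 := dq_le hε y
  have h2 := dq_nonneg hε (y-1)
  have h3 := dq_le hε (y-2)
  have h4 := dq_nonneg hε (y-3)
  linarith

private lemma dpsi_reg1 {ε y : ℝ} (hε : 0 < ε) (h1 : 2*ε ≤ y) (h2 : y ≤ 1-ε) :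
    psif (y+ε) - 2*psif y + psif (y-ε) = ε^2 := by
  rw [dpsi_eq, dq_of_ge hε.le (by linarith), dq_of_le hε.le (by linarith : y-1 ≤ -ε),
    dq_of_le hε.le (by linarith : y-2 ≤ -ε), dq_of_le hε.le (by linarith : y-3 ≤ -ε)]
  ring

private lemma dpsi_reg3 {ε y : ℝ} (hε : 0 < ε) (h1 : 1+ε ≤ y) (h2 : y ≤ 2-ε) :
    psif (y+ε) - 2*psif y + psif (y-ε) = -2*ε^2 := by
  rw [dpsi_eq, dq_of_ge hε.le (by linarith), dq_of_ge hε.le (by linarith : ε ≤ y-1),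
    dq_of_le hε.le (by linarith : y-2 ≤ -ε), dq_of_le hε.le (by linarith : y-3 ≤ -ε)]
  ring

private lemma dpsi_reg5 {ε y : ℝ} (hε : 0 < ε) (h1 : 2+ε ≤ y) (h2 : y ≤ 3-2*ε) :
    psif (y+ε) - 2*psif y + psif (y-ε) = ε^2 := by
  rw [dpsi_eq, dq_of_ge hε.le (by linarith), dq_of_ge hε.le (by linarith : ε ≤ y-1),
    dq_of_ge hε.le (by linarith : ε ≤ y-2), dq_of_le hε.le (by linarith : y-3 ≤ -ε)]
  ring

private lemma cutL {F : ℝ → ℝ} (hF : Continuous F) {a b c : ℝ}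
    (hz : ∀ u ∈ uIcc a c, F u = 0) :
    (∫ u in a..b, F u) = ∫ u in c..b, F u := by
  have h0 : (∫ u in a..c, F u) = 0 := by
    rw [intervalIntegral.integral_congr (g := fun _ => (0:ℝ)) hz]
    simp
  have hadd := intervalIntegral.integral_add_adjacent_intervals (μ := MeasureTheory.volume)
    (hF.intervalIntegrable a c) (hF.intervalIntegrable c b)
  linarith

private lemma cutR {F : ℝ → ℝ} (hF : Continuous F) {a b c : ℝ}
    (hz : ∀ u ∈ uIcc c b, F u = 0) :
    (∫ u in a..b, F u) = ∫ u in a..c, F u := by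
  have h0 : (∫ u in c..b, F u) = 0 := by
    rw [intervalIntegral.integral_congr (g := fun _ => (0:ℝ)) hz]
    simp
  have hadd := intervalIntegral.integral_add_adjacent_intervals (μ := MeasureTheory.volume)
    (hF.intervalIntegrable a c) (hF.intervalIntegrable c b)
  linarith

private lemma split3 {F : ℝ → ℝ} (hF : Continuous F) (a b c d : ℝ) :
    (∫ u in a..d, F u) = (∫ u in a..b, F u) + (∫ u in b..c, F u) + ∫ u in c..d, F u := by
  have h1 := intervalIntegral.integral_add_adjacent_intervals (μ := MeasureTheory.volume)
    (hF.intervalIntegrable a b) (hF.intervalIntegrable b c)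
  have h2 := intervalIntegral.integral_add_adjacent_intervals (μ := MeasureTheory.volume)
    (hF.intervalIntegrable a c) (hF.intervalIntegrable c d)
  linarith

private lemma mono_seg {F : ℝ → ℝ} (hF : Continuous F) (hnn : ∀ u, 0 ≤ F u)
    {a b c d : ℝ} (hac : a ≤ c) (hcd : c ≤ d) (hdb : d ≤ b) :
    (∫ u in c..d, F u) ≤ ∫ u in a..b, F u := by
  rw [split3 hF a c d b]
  have h1 : 0 ≤ ∫ u in a..c, F u :=
    intervalIntegral.integral_nonneg hac (fun u _ => hnn u)
  have h2 : 0 ≤ ∫ u in d..b, F u :=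
    intervalIntegral.integral_nonneg hdb (fun u _ => hnn u)
  linarith

/-- Second-difference approximation of the second derivative. -/
private lemma second_diff_approx {φ : ℝ → ℝ}
    (hd1 : Differentiable ℝ φ) (hd2 : Differentiable ℝ (deriv φ))
    (hc1 : Continuous (deriv φ)) (hc2 : Continuous (deriv (deriv φ)))
    {ε ω : ℝ} (hε : 0 < ε)
    (hω : ∀ u v : ℝ, |u - v| ≤ ε → |deriv (deriv φ) u - deriv (deriv φ) v| ≤ ω)
    (x : ℝ) :
    |φ (x+ε) - 2*φ x + φ (x-ε) - ε^2 * deriv (deriv φ) x| ≤ 2*ε^2*ω := by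
  have hω0 : 0 ≤ ω := le_trans (by simp) (hω x x (by simp [hε.le]))
  -- inner estimate
  have inner : ∀ s ∈ Set.uIoc (0:ℝ) ε,
      |(deriv φ (x+s) - deriv φ (x-s)) - 2*s*(deriv (deriv φ) x)| ≤ 2*ε*ω := by
    intro s hs
    rw [Set.uIoc_of_le hε.le] at hs
    obtain ⟨hs0, hsε⟩ := hs
    -- FTC for deriv φ on [-s, s] shifted by x
    have hder : ∀ t ∈ uIcc (-s) s, HasDerivAt (fun t => deriv φ (x+t))
        (deriv (deriv φ) (x+t)) t := by
      intro t _
      have h1 : HasDerivAt (fun t : ℝ => x + t) 1 t := (hasDerivAt_id t).const_add x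
      have h2 : HasDerivAt (deriv φ) (deriv (deriv φ) (x+t)) (x+t) :=
        (hd2 (x+t)).hasDerivAt
      simpa [Function.comp_def] using h2.comp t h1
    have hint : IntervalIntegrable (fun t => deriv (deriv φ) (x+t)) MeasureTheory.volume (-s) s :=
      (hc2.comp (continuous_const.add continuous_id)).intervalIntegrable _ _
    have e1 : (∫ t in (-s)..s, deriv (deriv φ) (x+t))
        = deriv φ (x+s) - deriv φ (x + -s) :=
      intervalIntegral.integral_eq_sub_of_hasDerivAt hder hint
    have e2 : (∫ t in (-s)..s, deriv (deriv φ) x) = 2*s*(deriv (deriv φ) x) := by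
      rw [intervalIntegral.integral_const]
      rw [smul_eq_mul]; ring
    have e3 : (∫ t in (-s)..s, (deriv (deriv φ) (x+t) - deriv (deriv φ) x))
        = (deriv φ (x+s) - deriv φ (x-s)) - 2*s*(deriv (deriv φ) x) := by
      rw [intervalIntegral.integral_sub hint
        (intervalIntegrable_const)]
      rw [e1, e2]
      ring_nf
    rw [← e3]
    have hb : ∀ t ∈ Set.uIoc (-s) s,
        ‖deriv (deriv φ) (x+t) - deriv (deriv φ) x‖ ≤ ω := by
      intro t ht
      rw [Set.uIoc_of_le (by linarith : -s ≤ s)] at ht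
      rw [Real.norm_eq_abs]
      apply hω
      rw [show x + t - x = t by ring]
      rw [abs_le]
      constructor <;> [linarith [ht.1.le]; linarith [ht.2]]
    have := intervalIntegral.norm_integral_le_of_norm_le_const hb
    rw [Real.norm_eq_abs] at this
    have habs : |s - (-s)| = 2*s := by rw [abs_of_nonneg (by linarith)]; ring
    rw [habs] at this
    calc |∫ t in (-s)..s, (deriv (deriv φ) (x+t) - deriv (deriv φ) x)| ≤ ω * (2*s) := this
      _ ≤ 2*ε*ω := by nlinarith
  -- outer FTC
  have houter : ∀ s ∈ uIcc (0:ℝ) ε, HasDerivAt (fun s => φ (x+s) + φ (x-s))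
      (deriv φ (x+s) - deriv φ (x-s)) s := by
    intro s _
    have h1 : HasDerivAt (fun s : ℝ => x + s) 1 s := (hasDerivAt_id s).const_add x
    have h2 : HasDerivAt (fun s : ℝ => x - s) (-1) s := by
      exact (hasDerivAt_id s).const_sub x
    have h3 : HasDerivAt (fun s : ℝ => φ (x+s)) (deriv φ (x+s)) s := by
      simpa [Function.comp_def] using ((hd1 (x+s)).hasDerivAt).comp s h1
    have h4 : HasDerivAt (fun s : ℝ => φ (x-s)) (-(deriv φ (x-s))) s := by
      have := ((hd1 (x-s)).hasDerivAt).comp s h2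
      simpa [Function.comp_def] using this
    have := h3.add h4
    simpa [sub_eq_add_neg, Pi.add_def] using this
  have hcontinner : Continuous (fun s => deriv φ (x+s) - deriv φ (x-s)) := by fun_prop
  have E1 : (∫ s in (0:ℝ)..ε, (deriv φ (x+s) - deriv φ (x-s)))
      = φ (x+ε) - 2*φ x + φ (x-ε) := by
    have := intervalIntegral.integral_eq_sub_of_hasDerivAt houter
      (hcontinner.intervalIntegrable _ _)
    rw [this]
    simp only [add_zero, sub_zero]
    ring
  have E2 : (∫ s in (0:ℝ)..ε, 2*s*(deriv (deriv φ) x)) = ε^2 * deriv (deriv φ) x := by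
    have : (fun s : ℝ => 2*s*(deriv (deriv φ) x)) = fun s => (2*(deriv (deriv φ) x)) * s := by
      funext s; ring
    rw [this, intervalIntegral.integral_const_mul, integral_id]
    ring
  have E3 : (∫ s in (0:ℝ)..ε, ((deriv φ (x+s) - deriv φ (x-s)) - 2*s*(deriv (deriv φ) x)))
      = φ (x+ε) - 2*φ x + φ (x-ε) - ε^2 * deriv (deriv φ) x := by
    rw [intervalIntegral.integral_sub (hcontinner.intervalIntegrable _ _)
      ((by fun_prop : Continuous (fun s : ℝ => 2*s*(deriv (deriv φ) x))).intervalIntegrable _ _)]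
    rw [E1, E2]
  rw [← E3]
  have hb2 : ∀ s ∈ Set.uIoc (0:ℝ) ε,
      ‖(deriv φ (x+s) - deriv φ (x-s)) - 2*s*(deriv (deriv φ) x)‖ ≤ 2*ε*ω := by
    intro s hs
    rw [Real.norm_eq_abs]
    exact inner s hs
  have := intervalIntegral.norm_integral_le_of_norm_le_const hb2
  rw [Real.norm_eq_abs] at this
  calc |∫ s in (0:ℝ)..ε, ((deriv φ (x+s) - deriv φ (x-s)) - 2*s*(deriv (deriv φ) x))|
      ≤ 2*ε*ω * |ε - 0| := this
    _ = 2*ε^2*ω := by rw [abs_of_nonneg (by linarith)]; ring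

/-- The three-annuli property for convex distributional subsolutions of
`h'' ≥ ĉ h` on `[0,3]`: there is `η > 0` such that if `∫₁² h ≥ (1-η)∫₀¹ h`,
then `∫₂³ h ≥ (1+η)∫₁² h`. -/
theorem stmt11 (chat : ℝ) (hchat : 0 < chat) :
    ∃ η : ℝ, 0 < η ∧ ∀ h : ℝ → ℝ,
      ContinuousOn h (Icc 0 3) →
      ConvexOn ℝ (Icc 0 3) h →
      (∀ x ∈ Icc (0:ℝ) 3, 0 ≤ h x) →
      (∀ φ : ℝ → ℝ, ContDiff ℝ 2 φ → (∀ x, 0 ≤ φ x) → tsupport φ ⊆ Ioo 0 3 →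
        chat * ∫ x in (0:ℝ)..3, h x * φ x ≤ ∫ x in (0:ℝ)..3, h x * deriv (deriv φ) x) →
      ((1 - η) * ∫ x in (0:ℝ)..1, h x) ≤ (∫ x in (1:ℝ)..2, h x) →
      ((1 + η) * ∫ x in (1:ℝ)..2, h x) ≤ ∫ x in (2:ℝ)..3, h x := by
  refine ⟨min (chat/600) (1/2), lt_min (by positivity) (by norm_num), ?_⟩
  intro h hcont hconv hpos hsub hlow
  set η := min (chat/600) (1/2) with hηdef
  have hη1 : η ≤ chat/600 := min_le_left _ _
  have hη2 : η ≤ 1/2 := min_le_right _ _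
  have hη0 : 0 < η := lt_min (by positivity) (by norm_num)
  -- the continuous extension of h to all of ℝ
  set H : ℝ → ℝ := fun x => h (max 0 (min x 3)) with hHdef
  have hmem : ∀ x : ℝ, max 0 (min x 3) ∈ Icc (0:ℝ) 3 :=
    fun x => ⟨le_max_left _ _, max_le (by norm_num) (min_le_right _ _)⟩
  have hHeq : ∀ x ∈ Icc (0:ℝ) 3, H x = h x := by
    intro x hx
    simp only [hHdef]
    rw [min_eq_left hx.2, max_eq_right hx.1]
  have cH : Continuous H := hcont.comp_continuous (by fun_prop) hmem
  have hHnn : ∀ x, 0 ≤ H x := fun x => hpos _ (hmem x)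
  obtain ⟨M, hM⟩ := (isCompact_Icc (a := (0:ℝ)) (b := 3)).exists_bound_of_continuousOn hcont
  have hMH : ∀ x, H x ≤ M := by
    intro x
    have := hM _ (hmem x)
    rw [Real.norm_eq_abs] at this
    exact le_trans (le_abs_self _) this
  have hM0 : (0:ℝ) ≤ M := le_trans (hHnn 0) (hMH 0)
  -- convexity: nonnegative symmetric second differences inside [0,3]
  have hconvH : ∀ u ε : ℝ, 0 < ε → ε ≤ u → u ≤ 3 - ε →
      0 ≤ H (u+ε) - 2*H u + H (u-ε) := by
    intro u ε hε h1 h2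
    have m1 : u - ε ∈ Icc (0:ℝ) 3 := ⟨by linarith, by linarith⟩
    have m2 : u + ε ∈ Icc (0:ℝ) 3 := ⟨by linarith, by linarith⟩
    have m0 : u ∈ Icc (0:ℝ) 3 := ⟨by linarith, by linarith⟩
    have hc := hconv.2 m1 m2 (by norm_num : (0:ℝ) ≤ 1/2) (by norm_num : (0:ℝ) ≤ 1/2)
      (by norm_num : (1/2:ℝ) + 1/2 = 1)
    have harg : (1/2:ℝ) • (u-ε) + (1/2:ℝ) • (u+ε) = u := by
      rw [smul_eq_mul, smul_eq_mul]; ring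
    rw [harg, smul_eq_mul, smul_eq_mul] at hc
    rw [hHeq _ m1, hHeq _ m2, hHeq _ m0]
    linarith
  -- the test function: a scaled bump
  set f : ContDiffBump (3/2 : ℝ) := ⟨1/2, 7/5, by norm_num, by norm_num⟩ with hfdef
  set φ : ℝ → ℝ := fun x => (1/200 : ℝ) * f x with hφdef
  have hsm : ContDiff ℝ 3 φ := contDiff_const.mul f.contDiff
  have hφ2 : ContDiff ℝ 2 φ := hsm.of_le (by norm_num)
  have hsm' : ContDiff ℝ (2+1) φ := hsm.of_le (by norm_num)
  have hd1 : Differentiable ℝ φ := hsm.differentiable (by norm_num)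
  have hder2 : ContDiff ℝ (1+1) (deriv φ) :=
    (contDiff_succ_iff_deriv.mp hsm').2.2.of_le (by norm_num)
  have hd2 : Differentiable ℝ (deriv φ) := hder2.differentiable (by norm_num)
  have hc2 : Continuous (deriv (deriv φ)) := (contDiff_succ_iff_deriv.mp hder2).2.2.continuous
  have hc1 : Continuous (deriv φ) := hder2.continuous
  have cφ : Continuous φ := hsm.continuous
  have hballIoo : Metric.ball (3/2:ℝ) (7/5) = Ioo (1/10) (29/10) := by
    rw [Real.ball_eq_Ioo]; norm_num
  have hφz : ∀ x : ℝ, x ∉ Icc (1/10:ℝ) (29/10) → φ x = 0 := by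
    intro x hx
    have hfx : f x = 0 := by
      have hs : x ∉ Function.support f := by
        rw [f.support_eq, hballIoo]
        exact fun hm => hx (Ioo_subset_Icc_self hm)
      simpa [Function.mem_support, not_not] using hs
    simp [hφdef, hfx]
  have hφnn : ∀ x, 0 ≤ φ x := fun x => mul_nonneg (by norm_num) f.nonneg
  have hφzero : ∀ u : ℝ, u ∉ Ioo (1/10:ℝ) (29/10) → φ u = 0 := by
    intro u hu
    have hfu : f u = 0 := by
      have hs : u ∉ Function.support f := by
        rw [f.support_eq, hballIoo]; exact hu
      simpa [Function.mem_support, not_not] using hs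
    simp [hφdef, hfu]
  have hφlow : ∀ u : ℝ, u ≤ 1/10 → φ u = 0 :=
    fun u hu => hφzero u (fun hm => by have := hm.1; linarith)
  have hφhigh : ∀ u : ℝ, 29/10 ≤ u → φ u = 0 :=
    fun u hu => hφzero u (fun hm => by have := hm.2; linarith)
  have hφle : ∀ x, φ x ≤ psif x := by
    intro x
    by_cases hx : x ∈ Icc (1/10:ℝ) (29/10)
    · have h1 : φ x ≤ 1/200 := by
        have := f.le_one (x := x)
        simp only [hφdef]
        nlinarith
      exact le_trans h1 (psif_ge hx.1 hx.2)
    · rw [hφz x hx]; exact psif_nonneg x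
  have hφone : ∀ x ∈ Icc (1:ℝ) 2, φ x = 1/200 := by
    intro x hx
    have hfx : f x = 1 := by
      apply f.one_of_mem_closedBall
      rw [show (f.rIn : ℝ) = 1/2 from rfl, Real.closedBall_eq_Icc]
      constructor <;> [linarith [hx.1]; linarith [hx.2]]
    simp [hφdef, hfx]
  have htsup : tsupport φ ⊆ Ioo 0 3 := by
    have h1 : Function.support φ ⊆ Icc (1/10:ℝ) (29/10) := by
      intro x hx
      by_contra hcc
      exact hx (hφz x hcc)
    exact (closure_minimal h1 isClosed_Icc).trans (Icc_subset_Ioo (by norm_num) (by norm_num))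
  have hφcs : HasCompactSupport φ := HasCompactSupport.intro isCompact_Icc hφz
  have hUC : UniformContinuous (deriv (deriv φ)) :=
    (hφcs.deriv.deriv).uniformContinuous_of_continuous hc2
  have cpsi : Continuous psif := psif_continuous
  -- names for the three integrals of H
  set A := ∫ x in (0:ℝ)..1, H x with hAdef
  set B := ∫ x in (1:ℝ)..2, H x with hBdef
  set C := ∫ x in (2:ℝ)..3, H x with hCdef
  have hAeq : A = ∫ x in (0:ℝ)..1, h x := by
    apply intervalIntegral.integral_congr
    intro x hx
    rw [uIcc_of_le (by norm_num : (0:ℝ) ≤ 1)] at hx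
    exact hHeq x ⟨hx.1, by linarith [hx.2]⟩
  have hBeq : B = ∫ x in (1:ℝ)..2, h x := by
    apply intervalIntegral.integral_congr
    intro x hx
    rw [uIcc_of_le (by norm_num : (1:ℝ) ≤ 2)] at hx
    exact hHeq x ⟨by linarith [hx.1], by linarith [hx.2]⟩
  have hCeq : C = ∫ x in (2:ℝ)..3, h x := by
    apply intervalIntegral.integral_congr
    intro x hx
    rw [uIcc_of_le (by norm_num : (2:ℝ) ≤ 3)] at hx
    exact hHeq x ⟨by linarith [hx.1], hx.2⟩
  have hAnn : 0 ≤ A := intervalIntegral.integral_nonneg (by norm_num) (fun u _ => hHnn u)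
  have hBnn : 0 ≤ B := intervalIntegral.integral_nonneg (by norm_num) (fun u _ => hHnn u)
  -- THE KEY INEQUALITY
  have key : chat/200 * B ≤ A - 2*B + C := by
    apply le_of_forall_pos_le_add
    intro a ha
    set ω := a/(12*(M+1)) with hωdef
    have hω0 : 0 < ω := by positivity
    obtain ⟨δ, hδ0, hδ⟩ := Metric.uniformContinuous_iff.mp hUC ω hω0
    set ε := min (δ/2) (min (1/20) (a/(76*(M+1)))) with hεdef
    have hε0 : 0 < ε := lt_min (by positivity) (lt_min (by norm_num) (by positivity))
    have hε20 : ε ≤ 1/20 := le_trans (min_le_right _ _) (min_le_left _ _)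
    have hεa : ε ≤ a/(76*(M+1)) := le_trans (min_le_right _ _) (min_le_right _ _)
    have hεδ : ε < δ := lt_of_le_of_lt (min_le_left _ _) (by linarith)
    have hmod : ∀ u v : ℝ, |u - v| ≤ ε → |deriv (deriv φ) u - deriv (deriv φ) v| ≤ ω := by
      intro u v huv
      have hd : dist u v < δ := by rw [Real.dist_eq]; linarith
      have := hδ hd
      rw [Real.dist_eq] at this
      linarith
    -- continuity of the shifted integrands
    have cHp : Continuous fun x => H (x + ε) := cH.comp (continuous_id.add continuous_const)
    have cHm : Continuous fun x => H (x - ε) := cH.comp (continuous_id.sub continuous_const)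
    have cφp : Continuous fun x => φ (x + ε) := cφ.comp (continuous_id.add continuous_const)
    have cφm : Continuous fun x => φ (x - ε) := cφ.comp (continuous_id.sub continuous_const)
    have cpsip : Continuous fun x => psif (x + ε) := cpsi.comp (continuous_id.add continuous_const)
    have cpsim : Continuous fun x => psif (x - ε) := cpsi.comp (continuous_id.sub continuous_const)
    -- Step 1 : chat/200 * B ≤ chat * ∫ H φ
    have s1a : (∫ x in (1:ℝ)..2, H x * φ x) = (1/200) * B := by
      rw [hBdef, ← intervalIntegral.integral_const_mul]
      apply intervalIntegral.integral_congr
      intro x hx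
      rw [uIcc_of_le (by norm_num : (1:ℝ) ≤ 2)] at hx
      show H x * φ x = 1/200 * H x
      rw [hφone x hx]; ring
    have s1b : (∫ x in (1:ℝ)..2, H x * φ x) ≤ ∫ x in (0:ℝ)..3, H x * φ x :=
      mono_seg (cH.mul cφ) (fun u => mul_nonneg (hHnn u) (hφnn u))
        (by norm_num) (by norm_num) (by norm_num)
    have S1 : chat/200 * B ≤ chat * ∫ x in (0:ℝ)..3, H x * φ x := by
      have := mul_le_mul_of_nonneg_left s1b hchat.le
      rw [s1a] at this
      linarith
    -- Step 2 : use the subsolution hypothesis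
    have S2 : chat * (∫ x in (0:ℝ)..3, H x * φ x) ≤ ∫ x in (0:ℝ)..3, H x * deriv (deriv φ) x := by
      have hsub' := hsub φ hφ2 hφnn htsup
      have e1 : (∫ x in (0:ℝ)..3, h x * φ x) = ∫ x in (0:ℝ)..3, H x * φ x := by
        apply intervalIntegral.integral_congr
        intro x hx
        rw [uIcc_of_le (by norm_num : (0:ℝ) ≤ 3)] at hx
        show h x * φ x = H x * φ x
        rw [hHeq x hx]
      have e2 : (∫ x in (0:ℝ)..3, h x * deriv (deriv φ) x)
          = ∫ x in (0:ℝ)..3, H x * deriv (deriv φ) x := by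
        apply intervalIntegral.integral_congr
        intro x hx
        rw [uIcc_of_le (by norm_num : (0:ℝ) ≤ 3)] at hx
        show h x * deriv (deriv φ) x = H x * deriv (deriv φ) x
        rw [hHeq x hx]
      rw [e1, e2] at hsub'
      exact hsub'
    -- Step 3 : replace the second derivative by second differences
    have cΔφ : Continuous fun x => φ (x+ε) - 2*φ x + φ (x-ε) :=
      (cφp.sub (continuous_const.mul cφ)).add cφm
    have S3 : ε^2 * (∫ x in (0:ℝ)..3, H x * deriv (deriv φ) x)
        ≤ (∫ x in (0:ℝ)..3, H x * (φ (x+ε) - 2*φ x + φ (x-ε))) + 6*M*ε^2*ω := by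
      have hmono : (∫ x in (0:ℝ)..3, ε^2 * (H x * deriv (deriv φ) x))
          ≤ ∫ x in (0:ℝ)..3, (H x * (φ (x+ε) - 2*φ x + φ (x-ε)) + 2*M*ε^2*ω) := by
        apply intervalIntegral.integral_mono_on (by norm_num)
          ((continuous_const.fun_mul (cH.fun_mul hc2)).intervalIntegrable _ _)
          (((cH.fun_mul cΔφ).fun_add continuous_const).intervalIntegrable _ _)
        intro x _
        have ht := second_diff_approx hd1 hd2 hc1 hc2 hε0 hmod x
        have h1 := (abs_le.mp ht).1
        have h2 : ε^2 * deriv (deriv φ) x ≤ (φ (x+ε) - 2*φ x + φ (x-ε)) + 2*ε^2*ω := by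
          linarith
        have h3 := mul_le_mul_of_nonneg_left h2 (hHnn x)
        have h4 : H x * (2*ε^2*ω) ≤ M * (2*ε^2*ω) :=
          mul_le_mul_of_nonneg_right (hMH x) (by positivity)
        nlinarith
      rw [intervalIntegral.integral_const_mul] at hmono
      rw [intervalIntegral.integral_add ((cH.fun_mul cΔφ).intervalIntegrable _ _)
        intervalIntegrable_const, intervalIntegral.integral_const, smul_eq_mul] at hmono
      linarith [hmono]
    -- Step 4 : move the second difference onto H
    have sh1 : (∫ x in (0:ℝ)..3, H x * φ (x+ε)) = ∫ u in (0:ℝ)..3, H (u-ε) * φ u := by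
      have e : ∀ x ∈ uIcc (0:ℝ) 3, H x * φ (x+ε) = (fun u => H (u-ε) * φ u) (x+ε) := by
        intro x _
        simp [add_sub_cancel_right]
      rw [intervalIntegral.integral_congr e,
        intervalIntegral.integral_comp_add_right (fun u => H (u-ε) * φ u) ε, zero_add]
      rw [cutL (cHm.fun_mul cφ) (a := ε) (c := 0) ?_, cutR (cHm.fun_mul cφ) (b := 3+ε) (c := 3) ?_]
      · intro u hu
        show H (u-ε) * φ u = 0
        rcases Set.mem_uIcc.mp hu with ⟨h1, h2⟩ | ⟨h1, h2⟩ <;>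
          first
          | rw [hφlow u (by linarith), mul_zero]
          | rw [hφhigh u (by linarith), mul_zero]
      · intro u hu
        show H (u-ε) * φ u = 0
        rcases Set.mem_uIcc.mp hu with ⟨h1, h2⟩ | ⟨h1, h2⟩ <;>
          first
          | rw [hφlow u (by linarith), mul_zero]
          | rw [hφhigh u (by linarith), mul_zero]
    have sh2 : (∫ x in (0:ℝ)..3, H x * φ (x-ε)) = ∫ u in (0:ℝ)..3, H (u+ε) * φ u := by
      have e : ∀ x ∈ uIcc (0:ℝ) 3, H x * φ (x-ε) = (fun u => H (u+ε) * φ u) (x-ε) := by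
        intro x _
        simp [sub_add_cancel]
      rw [intervalIntegral.integral_congr e,
        intervalIntegral.integral_comp_sub_right (fun u => H (u+ε) * φ u) ε, zero_sub]
      rw [cutL (cHp.fun_mul cφ) (a := -ε) (c := 0) ?_, cutR (cHp.fun_mul cφ) (b := 3-ε) (c := 3) ?_]
      · intro u hu
        show H (u+ε) * φ u = 0
        rcases Set.mem_uIcc.mp hu with ⟨h1, h2⟩ | ⟨h1, h2⟩ <;>
          first
          | rw [hφlow u (by linarith), mul_zero]
          | rw [hφhigh u (by linarith), mul_zero]
      · intro u hu
        show H (u+ε) * φ u = 0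
        rcases Set.mem_uIcc.mp hu with ⟨h1, h2⟩ | ⟨h1, h2⟩ <;>
          first
          | rw [hφlow u (by linarith), mul_zero]
          | rw [hφhigh u (by linarith), mul_zero]
    have expand1 : (∫ x in (0:ℝ)..3, H x * (φ (x+ε) - 2*φ x + φ (x-ε)))
        = (∫ x in (0:ℝ)..3, H x * φ (x+ε)) - 2*(∫ x in (0:ℝ)..3, H x * φ x)
          + ∫ x in (0:ℝ)..3, H x * φ (x-ε) := by
      have e : ∀ x ∈ uIcc (0:ℝ) 3, H x * (φ (x+ε) - 2*φ x + φ (x-ε))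
          = (H x * φ (x+ε) - 2*(H x * φ x)) + H x * φ (x-ε) := fun x _ => by ring
      rw [intervalIntegral.integral_congr e,
        intervalIntegral.integral_add ((( cH.fun_mul cφp).fun_sub
          (continuous_const.fun_mul (cH.fun_mul cφ))).intervalIntegrable _ _)
          ((cH.fun_mul cφm).intervalIntegrable _ _),
        intervalIntegral.integral_sub ((cH.fun_mul cφp).intervalIntegrable _ _)
          ((continuous_const.fun_mul (cH.fun_mul cφ)).intervalIntegrable _ _),
        intervalIntegral.integral_const_mul]
    have expand2 : (∫ u in (0:ℝ)..3, φ u * (H (u+ε) - 2*H u + H (u-ε)))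
        = (∫ u in (0:ℝ)..3, H (u-ε) * φ u) - 2*(∫ x in (0:ℝ)..3, H x * φ x)
          + ∫ u in (0:ℝ)..3, H (u+ε) * φ u := by
      have e : ∀ u ∈ uIcc (0:ℝ) 3, φ u * (H (u+ε) - 2*H u + H (u-ε))
          = (H (u-ε) * φ u - 2*(H u * φ u)) + H (u+ε) * φ u := fun u _ => by ring
      rw [intervalIntegral.integral_congr e,
        intervalIntegral.integral_add (((cHm.fun_mul cφ).fun_sub
          (continuous_const.fun_mul (cH.fun_mul cφ))).intervalIntegrable _ _)
          ((cHp.fun_mul cφ).intervalIntegrable _ _),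
        intervalIntegral.integral_sub ((cHm.fun_mul cφ).intervalIntegrable _ _)
          ((continuous_const.fun_mul (cH.fun_mul cφ)).intervalIntegrable _ _),
        intervalIntegral.integral_const_mul]
    have S4 : (∫ x in (0:ℝ)..3, H x * (φ (x+ε) - 2*φ x + φ (x-ε)))
        = ∫ u in (0:ℝ)..3, φ u * (H (u+ε) - 2*H u + H (u-ε)) := by
      rw [expand1, expand2, sh1, sh2]
    -- Step 5 : restrict to [ε, 3-ε]
    have cΔH : Continuous fun u => H (u+ε) - 2*H u + H (u-ε) :=
      (cHp.sub (continuous_const.mul cH)).add cHm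
    have S5 : (∫ u in (0:ℝ)..3, φ u * (H (u+ε) - 2*H u + H (u-ε)))
        = ∫ u in ε..(3-ε), φ u * (H (u+ε) - 2*H u + H (u-ε)) := by
      rw [cutL (cφ.fun_mul cΔH) (a := (0:ℝ)) (c := ε) ?_, cutR (cφ.fun_mul cΔH) (b := (3:ℝ)) (c := 3-ε) ?_]
      · intro u hu
        show φ u * (H (u+ε) - 2*H u + H (u-ε)) = 0
        rcases Set.mem_uIcc.mp hu with ⟨h1, h2⟩ | ⟨h1, h2⟩ <;>
          first
          | rw [hφlow u (by linarith), zero_mul]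
          | rw [hφhigh u (by linarith), zero_mul]
      · intro u hu
        show φ u * (H (u+ε) - 2*H u + H (u-ε)) = 0
        rcases Set.mem_uIcc.mp hu with ⟨h1, h2⟩ | ⟨h1, h2⟩ <;>
          first
          | rw [hφlow u (by linarith), zero_mul]
          | rw [hφhigh u (by linarith), zero_mul]
    -- Step 6 : compare with psif
    have S6 : (∫ u in ε..(3-ε), φ u * (H (u+ε) - 2*H u + H (u-ε)))
        ≤ ∫ u in ε..(3-ε), psif u * (H (u+ε) - 2*H u + H (u-ε)) := by
      apply intervalIntegral.integral_mono_on (by linarith)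
        ((cφ.mul cΔH).intervalIntegrable _ _) ((cpsi.mul cΔH).intervalIntegrable _ _)
      intro u hu
      exact mul_le_mul_of_nonneg_right (hφle u) (hconvH u ε hε0 hu.1 (by linarith [hu.2]))
    -- Step 7 : expand and shift
    have sh3 : (∫ u in ε..(3-ε), psif u * H (u+ε)) = ∫ y in (2*ε)..3, psif (y-ε) * H y := by
      have e : ∀ u ∈ uIcc ε (3-ε), psif u * H (u+ε) = (fun y => psif (y-ε) * H y) (u+ε) := by
        intro u _
        simp [add_sub_cancel_right]
      rw [intervalIntegral.integral_congr e,
        intervalIntegral.integral_comp_add_right (fun y => psif (y-ε) * H y) ε,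
        show ε + ε = 2*ε by ring, show 3 - ε + ε = 3 by ring]
    have sh4 : (∫ u in ε..(3-ε), psif u * H (u-ε)) = ∫ y in (0:ℝ)..(3-2*ε), psif (y+ε) * H y := by
      have e : ∀ u ∈ uIcc ε (3-ε), psif u * H (u-ε) = (fun y => psif (y+ε) * H y) (u-ε) := by
        intro u _
        simp [sub_add_cancel]
      rw [intervalIntegral.integral_congr e,
        intervalIntegral.integral_comp_sub_right (fun y => psif (y+ε) * H y) ε,
        show ε - ε = (0:ℝ) by ring, show 3 - ε - ε = 3-2*ε by ring]
    have expand3 : (∫ u in ε..(3-ε), psif u * (H (u+ε) - 2*H u + H (u-ε)))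
        = (∫ u in ε..(3-ε), psif u * H (u+ε)) - 2*(∫ u in ε..(3-ε), psif u * H u)
          + ∫ u in ε..(3-ε), psif u * H (u-ε) := by
      have e : ∀ u ∈ uIcc ε (3-ε), psif u * (H (u+ε) - 2*H u + H (u-ε))
          = (psif u * H (u+ε) - 2*(psif u * H u)) + psif u * H (u-ε) := fun u _ => by ring
      rw [intervalIntegral.integral_congr e,
        intervalIntegral.integral_add (((cpsi.fun_mul cHp).fun_sub
          (continuous_const.fun_mul (cpsi.fun_mul cH))).intervalIntegrable _ _)
          ((cpsi.fun_mul cHm).intervalIntegrable _ _),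
        intervalIntegral.integral_sub ((cpsi.fun_mul cHp).intervalIntegrable _ _)
          ((continuous_const.fun_mul (cpsi.fun_mul cH)).intervalIntegrable _ _),
        intervalIntegral.integral_const_mul]
    -- Step 8 : boundary strips
    have str1 : (∫ y in (2*ε)..3, psif (y-ε) * H y)
        ≤ (∫ y in (2*ε)..(3-2*ε), psif (y-ε) * H y) + 9*M*ε^3 := by
      have hsplit := intervalIntegral.integral_add_adjacent_intervals
        (μ := MeasureTheory.volume) (a := 2*ε) (b := 3-2*ε) (c := 3)
        ((cpsim.fun_mul cH).intervalIntegrable _ _) ((cpsim.fun_mul cH).intervalIntegrable _ _)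
      have htail : (∫ y in (3-2*ε)..3, psif (y-ε) * H y) ≤ 9*M*ε^3 := by
        have hmono : (∫ y in (3-2*ε)..3, psif (y-ε) * H y)
            ≤ ∫ y in (3-2*ε)..3, (9/2*ε^2*M : ℝ) := by
          apply intervalIntegral.integral_mono_on (by linarith)
            ((cpsim.fun_mul cH).intervalIntegrable _ _) intervalIntegrable_const
          intro y hy
          have hy1 : 2 ≤ y - ε := by linarith [hy.1]
          have hy2 : y - ε ≤ 3 := by linarith [hy.2]
          rw [psif_eq_right hy1 hy2]
          have hb : (3-(y-ε))^2 ≤ 9*ε^2 := by nlinarith [hy.1, hy.2]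
          have hbb : (3-(y-ε))^2/2 * H y ≤ 9*ε^2/2 * H y :=
            mul_le_mul_of_nonneg_right (by linarith) (hHnn y)
          have hbc : 9*ε^2/2 * H y ≤ 9*ε^2/2 * M :=
            mul_le_mul_of_nonneg_left (hMH y) (by positivity)
          calc (3-(y-ε))^2/2 * H y ≤ 9*ε^2/2 * M := by linarith
            _ = 9/2*ε^2*M := by ring
        rw [intervalIntegral.integral_const, smul_eq_mul] at hmono
        calc (∫ y in (3-2*ε)..3, psif (y-ε) * H y) ≤ (3-(3-2*ε)) * (9/2*ε^2*M) := hmono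
          _ = 9*M*ε^3 := by ring
      linarith
    have str2 : (∫ y in (0:ℝ)..(3-2*ε), psif (y+ε) * H y)
        ≤ (∫ y in (2*ε)..(3-2*ε), psif (y+ε) * H y) + 9*M*ε^3 := by
      have hsplit := intervalIntegral.integral_add_adjacent_intervals
        (μ := MeasureTheory.volume) (a := (0:ℝ)) (b := 2*ε) (c := 3-2*ε)
        ((cpsip.fun_mul cH).intervalIntegrable _ _) ((cpsip.fun_mul cH).intervalIntegrable _ _)
      have htail : (∫ y in (0:ℝ)..(2*ε), psif (y+ε) * H y) ≤ 9*M*ε^3 := by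
        have hmono : (∫ y in (0:ℝ)..(2*ε), psif (y+ε) * H y)
            ≤ ∫ y in (0:ℝ)..(2*ε), (9/2*ε^2*M : ℝ) := by
          apply intervalIntegral.integral_mono_on (by linarith)
            ((cpsip.fun_mul cH).intervalIntegrable _ _) intervalIntegrable_const
          intro y hy
          have hy1 : 0 ≤ y + ε := by linarith [hy.1]
          have hy2 : y + ε ≤ 1 := by linarith [hy.2]
          rw [psif_eq_left hy1 hy2]
          have hb : (y+ε)^2 ≤ 9*ε^2 := by nlinarith [hy.1, hy.2]
          have hbb : (y+ε)^2/2 * H y ≤ 9*ε^2/2 * H y :=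
            mul_le_mul_of_nonneg_right (by linarith) (hHnn y)
          have hbc : 9*ε^2/2 * H y ≤ 9*ε^2/2 * M :=
            mul_le_mul_of_nonneg_left (hMH y) (by positivity)
          calc (y+ε)^2/2 * H y ≤ 9*ε^2/2 * M := by linarith
            _ = 9/2*ε^2*M := by ring
        rw [intervalIntegral.integral_const, smul_eq_mul] at hmono
        calc (∫ y in (0:ℝ)..(2*ε), psif (y+ε) * H y) ≤ (2*ε-0) * (9/2*ε^2*M) := hmono
          _ = 9*M*ε^3 := by ring
      linarith
    have str3 : (∫ u in (2*ε)..(3-2*ε), psif u * H u) ≤ ∫ u in ε..(3-ε), psif u * H u :=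
      mono_seg (cpsi.mul cH) (fun u => mul_nonneg (psif_nonneg u) (hHnn u))
        (by linarith) (by linarith) (by linarith)
    -- Step 9 : recombine over [2ε, 3-2ε]
    have expand4 : (∫ y in (2*ε)..(3-2*ε), (psif (y+ε) - 2*psif y + psif (y-ε)) * H y)
        = (∫ y in (2*ε)..(3-2*ε), psif (y-ε) * H y)
          + (∫ y in (2*ε)..(3-2*ε), psif (y+ε) * H y)
          - 2*(∫ y in (2*ε)..(3-2*ε), psif y * H y) := by
      have e : ∀ y ∈ uIcc (2*ε) (3-2*ε), (psif (y+ε) - 2*psif y + psif (y-ε)) * H y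
          = (psif (y-ε) * H y + psif (y+ε) * H y) - 2*(psif y * H y) := fun y _ => by ring
      rw [intervalIntegral.integral_congr e,
        intervalIntegral.integral_sub (((cpsim.fun_mul cH).fun_add
          (cpsip.fun_mul cH)).intervalIntegrable _ _)
          ((continuous_const.fun_mul (cpsi.fun_mul cH)).intervalIntegrable _ _),
        intervalIntegral.integral_add ((cpsim.fun_mul cH).intervalIntegrable _ _)
          ((cpsip.fun_mul cH).intervalIntegrable _ _),
        intervalIntegral.integral_const_mul]
    -- Step 10 : the five regions
    have cdpsiH : Continuous fun y => (psif (y+ε) - 2*psif y + psif (y-ε)) * H y :=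
      ((cpsip.sub (continuous_const.mul cpsi)).add cpsim).mul cH
    have hsplit5a := split3 cdpsiH (2*ε) (1-ε) (1+ε) (3-2*ε)
    have hsplit5b := split3 cdpsiH (1+ε) (2-ε) (2+ε) (3-2*ε)
    have r1 : (∫ y in (2*ε)..(1-ε), (psif (y+ε) - 2*psif y + psif (y-ε)) * H y) ≤ ε^2 * A := by
      have e : ∀ y ∈ uIcc (2*ε) (1-ε), (psif (y+ε) - 2*psif y + psif (y-ε)) * H y
          = ε^2 * H y := by
        intro y hy
        rw [uIcc_of_le (by linarith)] at hy
        rw [dpsi_reg1 hε0 hy.1 hy.2]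
      rw [intervalIntegral.integral_congr e, intervalIntegral.integral_const_mul]
      apply mul_le_mul_of_nonneg_left _ (by positivity)
      rw [hAdef]
      exact mono_seg cH hHnn (by linarith) (by linarith) (by linarith)
    have r5 : (∫ y in (2+ε)..(3-2*ε), (psif (y+ε) - 2*psif y + psif (y-ε)) * H y)
        ≤ ε^2 * C := by
      have e : ∀ y ∈ uIcc (2+ε) (3-2*ε), (psif (y+ε) - 2*psif y + psif (y-ε)) * H y
          = ε^2 * H y := by
        intro y hy
        rw [uIcc_of_le (by linarith)] at hy
        rw [dpsi_reg5 hε0 hy.1 hy.2]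
      rw [intervalIntegral.integral_congr e, intervalIntegral.integral_const_mul]
      apply mul_le_mul_of_nonneg_left _ (by positivity)
      rw [hCdef]
      exact mono_seg cH hHnn (by linarith) (by linarith) (by linarith)
    have rmid : ∀ c1 c2 : ℝ, c1 ≤ c2 → c2 ≤ c1 + 2*ε →
        (∫ y in c1..c2, (psif (y+ε) - 2*psif y + psif (y-ε)) * H y) ≤ 8*M*ε^3 := by
      intro c1 c2 hc hc2
      have hmono : (∫ y in c1..c2, (psif (y+ε) - 2*psif y + psif (y-ε)) * H y)
          ≤ ∫ y in c1..c2, (4*ε^2*M : ℝ) := by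
        apply intervalIntegral.integral_mono_on hc (cdpsiH.intervalIntegrable _ _)
          intervalIntegrable_const
        intro y _
        have h1 := dpsi_le hε0.le y
        have h2 : (psif (y+ε) - 2*psif y + psif (y-ε)) * H y ≤ 4*ε^2 * H y :=
          mul_le_mul_of_nonneg_right h1 (hHnn y)
        have h3 : 4*ε^2 * H y ≤ 4*ε^2 * M := mul_le_mul_of_nonneg_left (hMH y) (by positivity)
        linarith
      rw [intervalIntegral.integral_const, smul_eq_mul] at hmono
      have : (c2 - c1) * (4*ε^2*M) ≤ 2*ε*(4*ε^2*M) := by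
        apply mul_le_mul_of_nonneg_right (by linarith) (by positivity)
      calc (∫ y in c1..c2, (psif (y+ε) - 2*psif y + psif (y-ε)) * H y)
          ≤ (c2 - c1) * (4*ε^2*M) := hmono
        _ ≤ 2*ε*(4*ε^2*M) := this
        _ = 8*M*ε^3 := by ring
    have r2 := rmid (1-ε) (1+ε) (by linarith) (by linarith)
    have r4 := rmid (2-ε) (2+ε) (by linarith) (by linarith)
    have r3 : (∫ y in (1+ε)..(2-ε), (psif (y+ε) - 2*psif y + psif (y-ε)) * H y)
        ≤ -2*ε^2*B + 4*M*ε^3 := by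
      have e : ∀ y ∈ uIcc (1+ε) (2-ε), (psif (y+ε) - 2*psif y + psif (y-ε)) * H y
          = (-2*ε^2) * H y := by
        intro y hy
        rw [uIcc_of_le (by linarith)] at hy
        rw [dpsi_reg3 hε0 hy.1 hy.2]
      rw [intervalIntegral.integral_congr e, intervalIntegral.integral_const_mul]
      have hsplitB := split3 cH 1 (1+ε) (2-ε) 2
      have t1 : (∫ y in (1:ℝ)..(1+ε), H y) ≤ ε * M := by
        have := intervalIntegral.integral_mono_on (by linarith : (1:ℝ) ≤ 1+ε)
          (cH.intervalIntegrable (μ := MeasureTheory.volume) _ _)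
          intervalIntegrable_const (fun y _ => hMH y)
        rw [intervalIntegral.integral_const, smul_eq_mul] at this
        calc (∫ y in (1:ℝ)..(1+ε), H y) ≤ (1+ε-1)*M := this
          _ = ε * M := by ring
      have t2 : (∫ y in (2-ε)..(2:ℝ), H y) ≤ ε * M := by
        have := intervalIntegral.integral_mono_on (by linarith : 2-ε ≤ (2:ℝ))
          (cH.intervalIntegrable (μ := MeasureTheory.volume) _ _)
          intervalIntegrable_const (fun y _ => hMH y)
        rw [intervalIntegral.integral_const, smul_eq_mul] at this
        calc (∫ y in (2-ε)..(2:ℝ), H y) ≤ (2-(2-ε))*M := this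
          _ = ε * M := by ring
      have hge : B - 2*ε*M ≤ ∫ y in (1+ε)..(2-ε), H y := by
        have hBB : B = (∫ y in (1:ℝ)..(1+ε), H y) + (∫ y in (1+ε)..(2-ε), H y)
            + ∫ y in (2-ε)..(2:ℝ), H y := hsplitB
        linarith
      have hmul := mul_le_mul_of_nonneg_left hge (show (0:ℝ) ≤ 2*ε^2 by positivity)
      linarith [hmul]
    -- put the five regions together
    have S10 : (∫ y in (2*ε)..(3-2*ε), (psif (y+ε) - 2*psif y + psif (y-ε)) * H y)
        ≤ ε^2*(A - 2*B + C) + 20*M*ε^3 := by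
      rw [hsplit5a, hsplit5b]
      linarith [r1, r2, r3, r4, r5]
    -- assemble everything
    have chain1 : ε^2 * (∫ x in (0:ℝ)..3, H x * deriv (deriv φ) x)
        ≤ ε^2*(A - 2*B + C) + 38*M*ε^3 + 6*M*ε^2*ω := by
      have c1 := S3
      rw [S4, S5] at c1
      have c2 := S6
      rw [expand3, sh3, sh4] at c2
      have c3 := expand4
      linarith [str1, str2, str3, S10]
    have chain2 : (∫ x in (0:ℝ)..3, H x * deriv (deriv φ) x)
        ≤ (A - 2*B + C) + 38*M*ε + 6*M*ω := by
      have heq : ε^2*(A - 2*B + C) + 38*M*ε^3 + 6*M*ε^2*ω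
          = ε^2 * ((A - 2*B + C) + 38*M*ε + 6*M*ω) := by ring
      rw [heq] at chain1
      exact le_of_mul_le_mul_left chain1 (by positivity)
    have hb1 : 38*M*ε ≤ a/2 := by
      have h1 : 38*(M+1)*ε ≤ 38*(M+1)*(a/(76*(M+1))) :=
        mul_le_mul_of_nonneg_left hεa (by positivity)
      have h2 : 38*(M+1)*(a/(76*(M+1))) = a/2 := by
        field_simp
        ring
      have h3 : 38*M*ε ≤ 38*(M+1)*ε :=
        mul_le_mul_of_nonneg_right (by linarith) hε0.le
      linarith
    have hb2 : 6*M*ω ≤ a/2 := by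
      have h2 : 6*(M+1)*ω = a/2 := by
        rw [hωdef]
        field_simp
        ring
      have h3 : 6*M*ω ≤ 6*(M+1)*ω :=
        mul_le_mul_of_nonneg_right (by linarith) hω0.le
      linarith
    linarith [S1, S2, chain2]
  -- FINAL ARITHMETIC
  rw [← hAeq, ← hBeq] at hlow
  rw [← hBeq, ← hCeq]
  have h1 : A ≤ 2*B := by nlinarith
  have h2 : A ≤ B + 2*η*B := by nlinarith [mul_le_mul_of_nonneg_left h1 hη0.le]
  have h3 : 3*η*B ≤ chat/200 * B := by
    apply mul_le_mul_of_nonneg_right _ hBnn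
    linarith
  nlinarith [key, h2, h3, mul_nonneg hη0.le hBnn]

end
end

section
/- The integrals I := (1/2)∫₀^{2π} (φ-π)(sin 2φ + sin φ) dφ and II := ∫₀^{2π} (sin²(φ/2) cos φ + sin(φ/2) cos(φ/2) sin φ) dφ satisfy I = -3π/2 and II = 0; in particular I + II ≠ 0. -/
open Real intervalIntegral

lemma deriv1 (x : ℝ) : HasDerivAt (fun φ : ℝ => -(φ - π) * (Real.cos (2 * φ) / 2 + Real.cos φ)
      + Real.sin (2 * φ) / 4 + Real.sin φ)
    ((x - π) * (Real.sin (2 * x) + Real.sin x)) x := by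
  have h2 : HasDerivAt (fun φ : ℝ => 2 * φ) 2 x := by
    simpa using (hasDerivAt_id x).const_mul 2
  have hc2 : HasDerivAt (fun φ : ℝ => Real.cos (2 * φ)) (-Real.sin (2 * x) * 2) x :=
    (Real.hasDerivAt_cos (2 * x)).comp x h2
  have hs2 : HasDerivAt (fun φ : ℝ => Real.sin (2 * φ)) (Real.cos (2 * x) * 2) x :=
    (Real.hasDerivAt_sin (2 * x)).comp x h2
  have h1 : HasDerivAt (fun φ : ℝ => -(φ - π)) (-1) x := by
    exact ((hasDerivAt_id x).sub_const π).neg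
  have hg : HasDerivAt (fun φ : ℝ => Real.cos (2 * φ) / 2 + Real.cos φ)
      ((-Real.sin (2 * x) * 2) / 2 + (-Real.sin x)) x :=
    (hc2.div_const 2).add (Real.hasDerivAt_cos x)
  have := ((h1.mul hg).add (hs2.div_const 4)).add (Real.hasDerivAt_sin x)
  refine this.congr_deriv ?_
  ring

lemma deriv2 (x : ℝ) : HasDerivAt (fun φ : ℝ => Real.sin (φ / 2) ^ 2 * Real.sin φ)
    (Real.sin (x / 2) ^ 2 * Real.cos x +
      Real.sin (x / 2) * Real.cos (x / 2) * Real.sin x) x := by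
  have h2 : HasDerivAt (fun φ : ℝ => φ / 2) (1 / 2 : ℝ) x := by
    simpa using (hasDerivAt_id x).div_const 2
  have hs : HasDerivAt (fun φ : ℝ => Real.sin (φ / 2)) (Real.cos (x / 2) * (1 / 2)) x :=
    by have := (Real.hasDerivAt_sin (x / 2)).comp x h2; exact this
  have hsq := hs.pow 2
  have := hsq.mul (Real.hasDerivAt_sin x)
  refine this.congr_deriv ?_
  simp only [Pi.pow_apply]
  norm_num
  ring

/-- The integrals `I = (1/2)∫₀^{2π} (φ-π)(sin 2φ + sin φ) dφ` and
`II = ∫₀^{2π} (sin²(φ/2) cos φ + sin(φ/2) cos(φ/2) sin φ) dφ` satisfy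
`I = -3π/2`, `II = 0`, and in particular `I + II ≠ 0`. -/
theorem stmt13 :
    let I : ℝ := (1 / 2) * ∫ φ in (0:ℝ)..(2 * π),
      (φ - π) * (Real.sin (2 * φ) + Real.sin φ)
    let II : ℝ := ∫ φ in (0:ℝ)..(2 * π),
      (Real.sin (φ / 2) ^ 2 * Real.cos φ +
        Real.sin (φ / 2) * Real.cos (φ / 2) * Real.sin φ)
    I = -3 * π / 2 ∧ II = 0 ∧ I + II ≠ 0 := by
  intro I II
  have hI : I = -3 * π / 2 := by
    have h := intervalIntegral.integral_eq_sub_of_hasDerivAt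
      (f := fun φ : ℝ => -(φ - π) * (Real.cos (2 * φ) / 2 + Real.cos φ)
        + Real.sin (2 * φ) / 4 + Real.sin φ)
      (f' := fun φ : ℝ => (φ - π) * (Real.sin (2 * φ) + Real.sin φ))
      (a := (0:ℝ)) (b := 2 * π) (fun x _ => deriv1 x)
      (by apply Continuous.intervalIntegrable; continuity)
    simp only [I, h]
    rw [show (2 * (2 * π)) = 2 * π + 2 * π by ring, show (2 * 0 : ℝ) = 0 by ring]
    simp [Real.sin_add, Real.cos_add]
    ring
  have hII : II = 0 := by
    have h := intervalIntegral.integral_eq_sub_of_hasDerivAt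
      (f := fun φ : ℝ => Real.sin (φ / 2) ^ 2 * Real.sin φ)
      (f' := fun φ : ℝ => Real.sin (φ / 2) ^ 2 * Real.cos φ +
        Real.sin (φ / 2) * Real.cos (φ / 2) * Real.sin φ)
      (a := (0:ℝ)) (b := 2 * π) (fun x _ => deriv2 x)
      (by apply Continuous.intervalIntegrable; continuity)
    simp only [II, h]
    simp
  refine ⟨hI, hII, ?_⟩
  rw [hI, hII]
  have := Real.pi_pos
  intro h
  nlinarith
end
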